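/- arXiv:1205.6707 — 5 statements merged into one kernel-verified Lean document; each statement's English description precedes it below -/
import Mathlib

section
/- Let K be a compact subset of ℝ^d and a ∈ K. Then there exists a dense G_δ set Ω(a) in the space M(K) of Borel probability measures on K (with the weak topology, metrized by the Lipschitz/Wasserstein-type metric ϱ) such that every μ ∈ Ω(a) has local Hölder exponent h_μ(a) = liminf_{r→0} log μ(B(a,r)) / log r equal to 0. -/
open MeasureTheory Metric Filter Topology

/-- The local Hölder exponent of a measure at a point:
`h_μ(x) = liminf_{r→0⁺} log μ(B(x,r)) / log r`. -/
noncomputable def holderExp {X : Type*} [MetricSpace X] [MeasurableSpace X]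
    (μ : Measure X) (x : X) : ℝ :=
  liminf (fun r : ℝ => Real.log (μ (ball x r)).toReal / Real.log r) (𝓝[>] 0)

open scoped ENNReal NNReal

section Aux

variable {X : Type*} [MetricSpace X] [MeasurableSpace X] [BorelSpace X]

lemma isOpen_lt_measure (G : Set X) (hG : IsOpen G) (c : ℝ≥0∞) :
    IsOpen {μ : ProbabilityMeasure X | c < (μ : Measure X) G} := by
  rw [isOpen_iff_mem_nhds]
  intro μ hμ
  exact Filter.eventually_lt_of_lt_liminf (lt_of_lt_of_le hμ
    (ProbabilityMeasure.le_liminf_measure_open_of_tendsto (tendsto_id (x := 𝓝 μ)) hG))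

/-- the convex combination `(1-t)μ + t δ_a` as a measure -/
noncomputable def combo (μ : ProbabilityMeasure X) (a : X) (t : ℝ) : Measure X :=
  (1 - t).toNNReal • (μ : Measure X) + t.toNNReal • Measure.dirac a

omit [MetricSpace X] [BorelSpace X] in
lemma combo_isProb (μ : ProbabilityMeasure X) (a : X) {t : ℝ} (h0 : 0 ≤ t) (h1 : t ≤ 1) :
    IsProbabilityMeasure (combo μ a t) := by
  constructor
  simp only [combo, Measure.add_apply, Measure.smul_apply, smul_eq_mul, measure_univ, mul_one]
  rw [ENNReal.smul_def, ENNReal.smul_def, smul_eq_mul, smul_eq_mul, mul_one, mul_one,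
    ← ENNReal.coe_add, ← Real.toNNReal_add (by linarith) h0]
  norm_num

omit [BorelSpace X] in
lemma combo_ball_lb (μ : ProbabilityMeasure X) (a : X) {t r : ℝ} (ht : 0 ≤ t) (hr : 0 < r) :
    ENNReal.ofReal t ≤ combo μ a t (ball a r) := by
  calc ENNReal.ofReal t = t.toNNReal • Measure.dirac a (ball a r) := by
        rw [Measure.dirac_apply_of_mem (mem_ball_self hr)]
        simp [ENNReal.ofReal, ENNReal.smul_def]
    _ ≤ combo μ a t (ball a r) := by
        simp only [combo, Measure.add_apply]
        exact le_add_self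

end Aux

/-- For a compact `K ⊂ ℝ^d` and `a ∈ K`, there is a dense `G_δ` set `Ω(a)` in the
space of Borel probability measures on `K` (with the weak topology) such that
every `μ ∈ Ω(a)` has local Hölder exponent `0` at `a`. -/
theorem typical_holder_exponent_zero_at_point
    (d : ℕ) (K : Set (EuclideanSpace ℝ (Fin d))) (hK : IsCompact K) (a : K) :
    ∃ Ω : Set (ProbabilityMeasure K), Dense Ω ∧ IsGδ Ω ∧
      ∀ μ ∈ Ω, holderExp (μ : Measure K) a = 0 := by
  set U : ℕ → Set (ProbabilityMeasure K) := fun n =>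
    ⋃ r ∈ Set.Ioo (0:ℝ) (1/(n+1)),
      {μ : ProbabilityMeasure K | ENNReal.ofReal (r ^ ((1:ℝ)/(n+1))) < (μ : Measure K) (ball a r)}
    with hU
  have hUopen : ∀ n, IsOpen (U n) := fun n =>
    isOpen_biUnion fun r _ => isOpen_lt_measure _ isOpen_ball _
  -- measures with an atom at `a` belong to every `U n`
  have hatom : ∀ (ν : ProbabilityMeasure K) (t : ℝ), 0 < t →
      (ENNReal.ofReal t ≤ (ν : Measure K) {a}) → ∀ n, ν ∈ U n := by
    intro ν t ht hν n
    have hα : (0:ℝ) < 1/(n+1) := by positivity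
    -- r ↦ r ^ (1/(n+1)) tends to 0 as r → 0⁺
    have htends : Tendsto (fun r : ℝ => r ^ ((1:ℝ)/(n+1))) (𝓝[>] 0) (𝓝 0) := by
      have := (Real.continuousAt_rpow_const 0 (1/(n+1)) (Or.inr hα.le)).tendsto
      rw [Real.zero_rpow hα.ne'] at this
      exact this.mono_left nhdsWithin_le_nhds
    have hev : ∀ᶠ r in 𝓝[>] (0:ℝ),
        r ∈ Set.Ioo (0:ℝ) (1/(n+1)) ∧ r ^ ((1:ℝ)/(n+1)) < t := by
      filter_upwards [Ioo_mem_nhdsGT hα, htends.eventually (gt_mem_nhds ht)]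
        with r hr hrt
      exact ⟨hr, hrt⟩
    obtain ⟨r, hr, hrt⟩ := hev.exists
    refine Set.mem_biUnion hr ?_
    have h1 : ENNReal.ofReal (r ^ ((1:ℝ)/(n+1))) < ENNReal.ofReal t :=
      ENNReal.ofReal_lt_ofReal_iff ht |>.mpr hrt
    refine lt_of_lt_of_le h1 (le_trans hν (measure_mono ?_))
    intro x hx
    simp only [Set.mem_singleton_iff] at hx
    subst hx
    exact mem_ball_self hr.1
  refine ⟨⋂ n, U n, ?_, IsGδ.iInter fun n => (hUopen n).isGδ, ?_⟩
  · -- density: perturb by a small dirac mass at `a`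
    intro μ
    set νP : ℝ → ProbabilityMeasure K := fun t =>
      if h : t ∈ Set.Ioo (0:ℝ) 1 then ⟨combo μ a t, combo_isProb μ a h.1.le h.2.le⟩ else μ
      with hνP
    have hmem : ∀ᶠ t in 𝓝[>] (0:ℝ), νP t ∈ ⋂ n, U n := by
      filter_upwards [Ioo_mem_nhdsGT one_pos] with t ht
      rw [Set.mem_iInter]
      refine hatom _ t ht.1 ?_
      rw [show νP t = ⟨combo μ a t, combo_isProb μ a ht.1.le ht.2.le⟩ from dif_pos ht]
      calc ENNReal.ofReal t = t.toNNReal • Measure.dirac (a:K) {a} := by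
            rw [Measure.dirac_apply_of_mem (Set.mem_singleton (a:K))]
            simp [ENNReal.ofReal, ENNReal.smul_def]
        _ ≤ combo μ a t {a} := by
            simp only [combo, Measure.add_apply]; exact le_add_self
    have htendsto : Tendsto νP (𝓝[>] (0:ℝ)) (𝓝 μ) := by
      rw [ProbabilityMeasure.tendsto_iff_forall_integral_tendsto]
      intro f
      have heq : ∀ᶠ t in 𝓝[>] (0:ℝ),
          ((1 - t) * ∫ x, f x ∂(μ : Measure K) + t * f a)
            = ∫ x, f x ∂(νP t : Measure K) := by
        filter_upwards [Ioo_mem_nhdsGT one_pos] with t ht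
        rw [show νP t = ⟨combo μ a t, combo_isProb μ a ht.1.le ht.2.le⟩ from dif_pos ht]
        show _ = ∫ x, f x ∂(combo μ a t)
        rw [combo, integral_add_measure (f.integrable _) (f.integrable _),
          integral_smul_nnreal_measure, integral_smul_nnreal_measure, integral_dirac]
        simp [NNReal.smul_def, Real.coe_toNNReal _ ht.1.le,
          Real.coe_toNNReal _ (by linarith [ht.2] : (0:ℝ) ≤ 1 - t)]
      refine Tendsto.congr' heq ?_
      have : Tendsto (fun t : ℝ => (1 - t) * ∫ x, f x ∂(μ : Measure K) + t * f a)
          (𝓝 0) (𝓝 ((1 - 0) * ∫ x, f x ∂(μ : Measure K) + 0 * f a)) := by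
        apply Tendsto.add
        · exact (tendsto_const_nhds.sub tendsto_id).mul tendsto_const_nhds
        · exact tendsto_id.mul tendsto_const_nhds
      simpa using this.mono_left nhdsWithin_le_nhds
    exact mem_closure_of_tendsto htendsto hmem
  · -- exponent is zero on the intersection
    intro μ hμ
    simp only [Set.mem_iInter, hU, Set.mem_iUnion, Set.mem_setOf_eq] at hμ
    set F : ℝ → ℝ := fun r => Real.log ((μ : Measure K) (ball (a:K) r)).toReal / Real.log r
      with hF
    have hFnonneg : ∀ᶠ r in 𝓝[>] (0:ℝ), 0 ≤ F r := by
      filter_upwards [Ioo_mem_nhdsGT one_pos] with r hr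
      rcases eq_or_ne ((μ : Measure K) (ball (a:K) r)) 0 with h | h
      · simp [hF, h]
      · refine div_nonneg_of_nonpos ?_ (Real.log_nonpos hr.1.le hr.2.le)
        apply Real.log_nonpos ENNReal.toReal_nonneg
        exact ENNReal.toReal_le_of_le_ofReal one_pos.le (by simpa using prob_le_one)
    have hbdd : IsBoundedUnder (· ≥ ·) (𝓝[>] (0:ℝ)) F := ⟨0, hFnonneg⟩
    -- the key frequent smallness
    have hfreq : ∀ ε : ℝ, 0 < ε → ∃ᶠ r in 𝓝[>] (0:ℝ), F r ≤ ε := by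
      intro ε hε
      rw [(nhdsGT_basis (0:ℝ)).frequently_iff]
      intro δ hδ
      obtain ⟨n, hn⟩ := exists_nat_one_div_lt (lt_min hε hδ)
      obtain ⟨r, hr, hrlt⟩ := hμ n
      have hα : (0:ℝ) < 1/(n+1) := by positivity
      have hεδ : (1:ℝ)/(n+1) < min ε δ := by exact_mod_cast hn
      have hr1 : r < 1 := lt_of_lt_of_le hr.2 (by
        rw [div_le_one (by positivity)]
        linarith [Nat.cast_nonneg (α := ℝ) n])
      refine ⟨r, ⟨hr.1, hr.2.trans (hεδ.trans_le (min_le_right _ _))⟩, ?_⟩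
      -- F r < 1/(n+1) ≤ ε
      have hmne : (μ : Measure K) (ball (a:K) r) ≠ ⊤ := measure_ne_top _ _
      have hmlt : r ^ ((1:ℝ)/(n+1)) < ((μ : Measure K) (ball (a:K) r)).toReal :=
        (ENNReal.ofReal_lt_iff_lt_toReal (Real.rpow_nonneg hr.1.le _) hmne).mp hrlt
      have hrpow_pos : (0:ℝ) < r ^ ((1:ℝ)/(n+1)) := Real.rpow_pos_of_pos hr.1 _
      have hlog : (1/(n+1) : ℝ) * Real.log r < Real.log (((μ : Measure K) (ball (a:K) r)).toReal) := by
        rw [← Real.log_rpow hr.1]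
        exact Real.log_lt_log hrpow_pos hmlt
      have hlogr : Real.log r < 0 := Real.log_neg hr.1 hr1
      have : F r < 1/(n+1) := by
        rw [hF, div_lt_iff_of_neg hlogr]
        exact hlog
      exact this.le.trans (hεδ.le.trans (min_le_left _ _))
    have hcob : IsCoboundedUnder (· ≥ ·) (𝓝[>] (0:ℝ)) F := by
      refine ⟨1, fun b hb => ?_⟩
      obtain ⟨r, h1, h2⟩ := ((hfreq 1 one_pos).and_eventually hb).exists
      exact le_trans h2 h1
    have h1 : 0 ≤ liminf F (𝓝[>] (0:ℝ)) := le_liminf_of_le hcob hFnonneg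
    have h2 : liminf F (𝓝[>] (0:ℝ)) ≤ 0 := by
      refine le_of_forall_pos_le_add fun ε hε => ?_
      rw [zero_add]
      exact liminf_le_of_frequently_le (hfreq ε hε) hbdd
    exact le_antisymm h2 h1
end

section
/- Let K ⊂ ℝ^d be compact, a ∈ K, and h > 0. Then the set Λ_h(a) = {μ ∈ M(K) : h_μ(a) = h} has empty interior in M(K). -/
open MeasureTheory Metric Filter Topology ENNReal
open scoped NNReal

/-- If a probability measure gives mass at least `ε > 0` to every ball around `x`, then its
local Hölder exponent at `x` is `0`. -/
lemma holderExp_eq_zero_of_mass {X : Type*} [MetricSpace X] [MeasurableSpace X]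
    (ν : Measure X) [IsProbabilityMeasure ν] (x : X) (ε : ℝ) (hε : 0 < ε)
    (hball : ∀ r : ℝ, 0 < r → ENNReal.ofReal ε ≤ ν (ball x r)) :
    holderExp ν x = 0 := by
  have key : Tendsto (fun r : ℝ => Real.log (ν (ball x r)).toReal / Real.log r)
      (𝓝[>] 0) (𝓝 0) := by
    have hgt : Tendsto (fun r : ℝ => (- Real.log ε) / (- Real.log r)) (𝓝[>] 0) (𝓝 0) := by
      apply Tendsto.div_atTop (tendsto_const_nhds)
      exact tendsto_neg_atBot_atTop.comp Real.tendsto_log_nhdsGT_zero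
    refine tendsto_of_tendsto_of_tendsto_of_le_of_le' (tendsto_const_nhds) hgt ?_ ?_
    · filter_upwards [Ioo_mem_nhdsGT_of_mem (Set.left_mem_Ico.2 one_pos)] with r hr
      have hlogr : Real.log r < 0 := Real.log_neg hr.1 hr.2
      have h1 : (ν (ball x r)).toReal ≤ 1 := by
        have := prob_le_one (μ := ν) (s := ball x r)
        exact ENNReal.toReal_le_of_le_ofReal one_pos.le (by simpa using this)
      have h0 : Real.log (ν (ball x r)).toReal ≤ 0 :=
        Real.log_nonpos ENNReal.toReal_nonneg h1
      exact div_nonneg_iff.2 (Or.inr ⟨h0, hlogr.le⟩)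
    · filter_upwards [Ioo_mem_nhdsGT_of_mem (Set.left_mem_Ico.2 one_pos)] with r hr
      have hlogr : Real.log r < 0 := Real.log_neg hr.1 hr.2
      have hmass : ε ≤ (ν (ball x r)).toReal := by
        have hle := hball r hr.1
        have hfin : ν (ball x r) ≠ ⊤ := (measure_lt_top ν _).ne
        have := ENNReal.toReal_mono hfin hle
        simpa [ENNReal.toReal_ofReal hε.le] using this
      have hlog : Real.log ε ≤ Real.log (ν (ball x r)).toReal :=
        Real.log_le_log hε hmass
      rw [neg_div_neg_eq]
      exact (div_le_div_right_of_neg hlogr).2 hlog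
  exact key.liminf_eq

/-- For a compact `K ⊂ ℝ^d`, `a ∈ K` and `h > 0`, the set
`Λ_h(a) = {μ ∈ M(K) : h_μ(a) = h}` has empty interior in the space of
probability measures on `K` with the weak topology. -/
theorem level_set_of_measures_empty_interior
    (d : ℕ) (K : Set (EuclideanSpace ℝ (Fin d))) (hK : IsCompact K) (a : K)
    (h : ℝ) (hh : 0 < h) :
    interior {μ : ProbabilityMeasure K | holderExp (μ : Measure K) a = h} = ∅ := by
  by_contra hne
  obtain ⟨μ, hμ⟩ := Set.nonempty_iff_ne_empty.2 hne
  -- the perturbed measures ν n = (1 - εₙ) μ + εₙ δ_a with εₙ = (n+1)⁻¹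
  set ε : ℕ → ℝ≥0∞ := fun n => ((n : ℝ≥0∞) + 1)⁻¹ with hεdef
  have hε_le_one : ∀ n, ε n ≤ 1 := by
    intro n
    simp only [hεdef]
    rw [ENNReal.inv_le_one]
    exact le_add_self
  have hε_ne_top : ∀ n, ε n ≠ ⊤ := by
    intro n
    simp only [hεdef]
    exact ENNReal.inv_ne_top.2 (by simp)
  have hε_pos : ∀ n, 0 < ε n := by
    intro n
    simp only [hεdef]
    exact ENNReal.inv_pos.2 (by simp)
  set m : ℕ → Measure K := fun n =>
    (1 - ε n) • (μ : Measure K) + ε n • Measure.dirac (a : K) with hmdef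
  have hm_prob : ∀ n, IsProbabilityMeasure (m n) := by
    intro n
    constructor
    simp only [hmdef, Measure.add_apply, Measure.smul_apply, smul_eq_mul,
      measure_univ, mul_one]
    exact tsub_add_cancel_of_le (hε_le_one n)
  set ν : ℕ → ProbabilityMeasure K := fun n => ⟨m n, hm_prob n⟩ with hνdef
  -- weak convergence ν n → μ
  have hconv : Tendsto ν atTop (𝓝 μ) := by
    rw [ProbabilityMeasure.tendsto_iff_forall_lintegral_tendsto]
    intro f
    have hrw : ∀ n, ∫⁻ ω, f ω ∂(ν n : Measure K)
        = (1 - ε n) * ∫⁻ ω, f ω ∂(μ : Measure K) + ε n * f a := by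
      intro n
      show ∫⁻ ω, f ω ∂(m n) = _
      rw [hmdef]
      simp only [lintegral_add_measure, lintegral_smul_measure, smul_eq_mul]
      rw [lintegral_dirac' _ (f.continuous.measurable.coe_nnreal_ennreal)]
    simp only [hrw]
    have hεlim : Tendsto ε atTop (𝓝 0) := by
      have := ENNReal.tendsto_inv_nat_nhds_zero.comp (tendsto_add_atTop_nat 1)
      simpa [hεdef, Function.comp_def] using this
    have hfin : ∫⁻ ω, f ω ∂(μ : Measure K) ≠ ⊤ :=
      (f.lintegral_lt_top_of_nnreal (μ : Measure K)).ne
    have h1 : Tendsto (fun n => (1 - ε n) * ∫⁻ ω, f ω ∂(μ : Measure K)) atTop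
        (𝓝 (∫⁻ ω, f ω ∂(μ : Measure K))) := by
      have hsub : Tendsto (fun n => 1 - ε n) atTop (𝓝 1) := by
        have := ENNReal.Tendsto.sub (tendsto_const_nhds (x := (1 : ℝ≥0∞))) hεlim
          (Or.inl one_ne_top)
        simpa using this
      have := ENNReal.Tendsto.mul hsub (Or.inr hfin) (tendsto_const_nhds)
        (Or.inr one_ne_top)
      simpa using this
    have h2 : Tendsto (fun n => ε n * (f a : ℝ≥0∞)) atTop (𝓝 0) := by
      have := ENNReal.Tendsto.mul_const hεlim (Or.inr (ENNReal.coe_ne_top (r := f a)))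
      simpa using this
    simpa using h1.add h2
  -- eventually ν n lies in the level set
  have hmem : ∀ᶠ n in atTop, ν n ∈ {μ : ProbabilityMeasure K |
      holderExp (μ : Measure K) a = h} := by
    filter_upwards [hconv.eventually_mem (isOpen_interior.mem_nhds hμ)] with n hn
    exact (interior_subset (s := {μ : ProbabilityMeasure K | holderExp (μ : Measure K) a = h})) hn
  obtain ⟨n, hn⟩ := hmem.exists
  -- but holderExp (ν n) a = 0, contradiction
  have hz : holderExp (ν n : Measure K) a = 0 := by
    have : IsProbabilityMeasure (m n) := hm_prob n
    refine holderExp_eq_zero_of_mass (m n) a (ε n).toReal ?_ ?_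
    · exact ENNReal.toReal_pos (hε_pos n).ne' (hε_ne_top n)
    · intro r hr
      rw [ENNReal.ofReal_toReal (hε_ne_top n)]
      have ha : (a : K) ∈ ball (a : K) r := mem_ball_self hr
      calc ε n = ε n * Measure.dirac (a : K) (ball (a : K) r) := by
            rw [Measure.dirac_apply' _ measurableSet_ball]
            simp [ha]
          _ ≤ m n (ball (a : K) r) := by
            rw [hmdef]
            simp only [Measure.add_apply, Measure.smul_apply, smul_eq_mul]
            exact le_add_self
  rw [Set.mem_setOf_eq, hz] at hn
  exact hh.ne hn
end

section
/- Let K ⊂ ℝ^d be compact, s ∈ (0,d], and A ⊂ K. Suppose there exists a finite Borel measure λ on K such that for every a ∈ A the lower s-density Θ^s_*(K,a,λ) = liminf_{r→0} (2r)^{−s} λ(K ∩ B(a,r)) is strictly positive. Then there exists a dense G_δ set Ω in M(K) such that for every μ ∈ Ω and every x ∈ A, h_μ(x) ≤ s; equivalently, for all μ ∈ Ω and all h > s, E_μ(h) ∩ A = ∅. -/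
open MeasureTheory Metric Filter Topology
open scoped ENNReal NNReal

/-- Lower `s`-density of `K` at `a` with respect to `λ`:
`Θ^s_*(K,a,λ) = liminf_{r↓0} (2r)^{-s} λ(K ∩ B(a,r))`. -/
noncomputable def lowerDensity {X : Type*} [MetricSpace X] [MeasurableSpace X]
    (K : Set X) (a : X) (lam : Measure X) (s : ℝ) : ℝ :=
  liminf (fun r : ℝ => (lam (K ∩ ball a r)).toReal / (2 * r) ^ s) (𝓝[>] 0)

namespace DensityAux

variable {X : Type*} [MetricSpace X] [MeasurableSpace X] [BorelSpace X]

lemma isOpen_lt_measure [TopologicalSpace.SeparableSpace X] {G : Set X} (hG : IsOpen G)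
    (c : ℝ≥0∞) : IsOpen {μ : ProbabilityMeasure X | c < (μ : Measure X) G} := by
  rw [← isClosed_compl_iff]
  have h : {μ : ProbabilityMeasure X | c < (μ : Measure X) G}ᶜ
      = {μ : ProbabilityMeasure X | (μ : Measure X) G ≤ c} := by
    ext μ; simp [not_lt]
  rw [h]
  apply IsSeqClosed.isClosed
  intro μs μ hmem hlim
  have h1 := MeasureTheory.ProbabilityMeasure.le_liminf_measure_open_of_tendsto hlim hG
  exact h1.trans (Filter.liminf_le_of_frequently_le' (Frequently.of_forall hmem))

omit [BorelSpace X] in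
/-- Inner continuity of measures of balls. -/
lemma exists_lt_measure_ball (μ : Measure X) {x : X} {r : ℝ} (hr : 0 < r) {c : ℝ≥0∞}
    (hc : c < μ (ball x r)) : ∃ r', 0 < r' ∧ r' < r ∧ c < μ (ball x r') := by
  have hmono : Monotone (fun k : ℕ => ball x (r - r / (k + 2))) := by
    intro a b hab
    apply ball_subset_ball
    have : (r : ℝ) / (b + 2) ≤ r / (a + 2) := by
      apply div_le_div_of_nonneg_left hr.le (by positivity)
      have : (a : ℝ) ≤ b := Nat.cast_le.mpr hab
      linarith
    linarith
  have hun : ball x r = ⋃ k : ℕ, ball x (r - r / (k + 2)) := by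
    ext y
    simp only [Set.mem_iUnion, mem_ball]
    constructor
    · intro hy
      obtain ⟨k, hk⟩ := exists_nat_gt (r / (r - dist y x))
      refine ⟨k, ?_⟩
      have hpos : 0 < r - dist y x := by linarith
      have h1 : r / (r - dist y x) < (k : ℝ) + 2 := by linarith
      have h2 : r / ((k : ℝ) + 2) < r - dist y x := by
        rw [div_lt_iff₀ (by positivity)]
        rw [div_lt_iff₀ hpos] at h1
        linarith [h1]
      linarith
    · rintro ⟨k, hk⟩
      have : (0:ℝ) < r / (k + 2) := by positivity
      linarith
  have htend := tendsto_measure_iUnion_atTop (μ := μ) hmono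
  rw [← hun] at htend
  obtain ⟨k, hk⟩ := (htend.eventually_const_lt hc).exists
  have h1 : r / ((k:ℝ) + 2) < r := by
    rw [div_lt_iff₀ (by positivity)]
    nlinarith
  have h2 : (0:ℝ) < r / (k + 2) := by positivity
  exact ⟨r - r / (k + 2), by linarith, by linarith, hk⟩

/-- Openness of the basic sets. -/
lemma isOpen_U [TopologicalSpace.SeparableSpace X] {B : Set X} (hB : IsCompact B)
    (hBc : IsClosed B) (e p : ℝ) :
    IsOpen {μ : ProbabilityMeasure X | ∀ x ∈ B, ∃ r : ℝ, 0 < r ∧ r < e ∧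
      ENNReal.ofReal (r ^ p) < (μ : Measure X) (ball x r)} := by
  rw [isOpen_iff_forall_mem_open]
  intro μ hμ
  choose r hr0 hre hrμ using hμ
  have hshrink : ∀ (x : X) (hx : x ∈ B), ∃ r', 0 < r' ∧ r' < r x hx ∧
      ENNReal.ofReal ((r x hx) ^ p) < (μ : Measure X) (ball x r') :=
    fun x hx => exists_lt_measure_ball _ (hr0 x hx) (hrμ x hx)
  choose r' hr'0 hr'lt hr'μ using hshrink
  have hcover : B ⊆ ⋃ i : B, ball (i : X) (r i.1 i.2 - r' i.1 i.2) := by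
    intro y hy
    exact Set.mem_iUnion.mpr ⟨⟨y, hy⟩, mem_ball_self (by
      have := hr'lt y hy; linarith)⟩
  obtain ⟨t, ht⟩ := hB.elim_finite_subcover
    (fun i : B => ball (i : X) (r i.1 i.2 - r' i.1 i.2)) (fun _ => isOpen_ball) hcover
  refine ⟨⋂ i ∈ t, {ν : ProbabilityMeasure X |
      ENNReal.ofReal ((r i.1 i.2) ^ p) < (ν : Measure X) (ball (i : X) (r' i.1 i.2))},
      ?_, ?_, ?_⟩
  · intro ν hν x hx
    obtain ⟨i, hit, hxi⟩ := Set.mem_iUnion₂.mp (ht hx)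
    refine ⟨r i.1 i.2, hr0 i.1 i.2, hre i.1 i.2, ?_⟩
    have hsub : ball (i : X) (r' i.1 i.2) ⊆ ball x (r i.1 i.2) := by
      intro z hz
      rw [mem_ball] at hz hxi ⊢
      have h := dist_triangle z (i : X) x
      rw [dist_comm (i : X) x] at h
      linarith
    have h1 := Set.mem_iInter₂.mp hν i hit
    exact lt_of_lt_of_le h1 (measure_mono hsub)
  · exact isOpen_biInter_finset fun i _ => isOpen_lt_measure isOpen_ball _
  · exact Set.mem_iInter₂.mpr fun i hit => hr'μ i.1 i.2

/-- The main auxiliary theorem on a compact metric space. -/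
theorem exists_dense_Gdelta [CompactSpace X] [TopologicalSpace.SeparableSpace X]
    (A : Set X) (s : ℝ) (hs : 0 < s) (lamb : Measure X) [IsFiniteMeasure lamb]
    (hdens : ∀ a ∈ A, ∃ C : ℝ, 0 < C ∧ ∃ δ : ℝ, 0 < δ ∧ ∀ r : ℝ, 0 < r → r < δ →
        ENNReal.ofReal (C * r ^ s) ≤ lamb (ball a r)) :
    ∃ Ω : Set (ProbabilityMeasure X), Dense Ω ∧ IsGδ Ω ∧
      ∀ μ ∈ Ω, ∀ x ∈ A, holderExp (μ : Measure X) x ≤ s := by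
  classical
  rcases A.eq_empty_or_nonempty with hAe | ⟨a0, ha0⟩
  · exact ⟨Set.univ, dense_univ, IsGδ.univ, fun μ _ x hx => by simp [hAe] at hx⟩
  choose! C hC0 δ hδ0 hCδ using hdens
  -- the pieces of A with uniform constants
  set B : ℕ → Set X := fun k => closure {a ∈ A | 1 / (k+1) ≤ C a ∧ 1 / (k+1) ≤ δ a} with hB
  have hBclosed : ∀ k, IsClosed (B k) := fun k => isClosed_closure
  have hBcomp : ∀ k, IsCompact (B k) := fun k => (hBclosed k).isCompact
  have hAB : ∀ a ∈ A, ∃ k, a ∈ B k := by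
    intro a ha
    obtain ⟨k, hk⟩ := exists_nat_gt (max (1 / C a) (1 / δ a))
    refine ⟨k, subset_closure ⟨ha, ?_, ?_⟩⟩
    · rw [one_div_le (by positivity) (hC0 a ha)]
      have h1 : 1 / C a < (k:ℝ) := lt_of_le_of_lt (le_max_left _ _) hk
      linarith
    · rw [one_div_le (by positivity) (hδ0 a ha)]
      have h1 : 1 / δ a < (k:ℝ) := lt_of_le_of_lt (le_max_right _ _) hk
      linarith
  -- uniform lower density bound on B k
  have hBdens : ∀ k, ∀ y ∈ B k, ∀ r : ℝ, 0 < r → r < 1 / (k+1) →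
      ENNReal.ofReal ((1 / (k+1) / 2 ^ s) * r ^ s) ≤ lamb (ball y r) := by
    intro k y hy r hr0 hrk
    obtain ⟨a, ⟨haA, haC, haδ⟩, hay⟩ := Metric.mem_closure_iff.mp hy (r/2) (by positivity)
    have hsub : ball a (r/2) ⊆ ball y r := by
      intro z hz
      rw [mem_ball] at hz ⊢
      have := dist_triangle z a y
      have hd : dist a y = dist y a := dist_comm _ _
      linarith
    refine le_trans ?_ (measure_mono hsub)
    refine le_trans ?_ (hCδ a haA (r/2) (by positivity) (by linarith))
    apply ENNReal.ofReal_le_ofReal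
    have h2 : (r/2) ^ s = r ^ s / 2 ^ s := Real.div_rpow hr0.le (by norm_num) s
    have h3 : (0:ℝ) < 2 ^ s := Real.rpow_pos_of_pos (by norm_num) s
    have h4 : (0:ℝ) < r ^ s := Real.rpow_pos_of_pos hr0 s
    calc 1 / ((k:ℝ)+1) / 2 ^ s * r ^ s = (1 / ((k:ℝ)+1)) * (r ^ s / 2 ^ s) := by ring
      _ ≤ C a * (r ^ s / 2 ^ s) := mul_le_mul_of_nonneg_right haC (by positivity)
      _ = C a * (r/2) ^ s := by rw [h2]
  -- the open sets
  set ε : ℕ → ℝ := fun n => 1 / (n + 1) with hε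
  have hεpos : ∀ n, 0 < ε n := fun n => by positivity
  set U : ℕ → ℕ → Set (ProbabilityMeasure X) := fun k n =>
    {μ | ∀ x ∈ B k, ∃ r : ℝ, 0 < r ∧ r < ε n ∧
      ENNReal.ofReal (r ^ (s + ε n)) < (μ : Measure X) (ball x r)} with hU
  have hUopen : ∀ k n, IsOpen (U k n) := fun k n =>
    isOpen_U (hBcomp k) (hBclosed k) (ε n) (s + ε n)
  refine ⟨⋂ k, ⋂ n, U k n, ?_, ?_, ?_⟩
  · -- density
    -- the measure lamb is nonzero
    have hlam0 : lamb Set.univ ≠ 0 := by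
      intro h0
      have h1 := hCδ a0 ha0 (δ a0 / 2) (by linarith [hδ0 a0 ha0]) (by linarith [hδ0 a0 ha0])
      have h2 : lamb (ball a0 (δ a0 / 2)) = 0 :=
        le_antisymm (le_trans (measure_mono (Set.subset_univ _)) h0.le) (zero_le)
      rw [h2, nonpos_iff_eq_zero, ENNReal.ofReal_eq_zero] at h1
      nlinarith [hC0 a0 ha0, Real.rpow_pos_of_pos (show (0:ℝ) < δ a0 / 2 by linarith [hδ0 a0 ha0]) s]
    have hlamtop : lamb Set.univ ≠ ⊤ := measure_ne_top _ _
    set Λ : Measure X := (lamb Set.univ)⁻¹ • lamb with hΛ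
    have hΛprob : IsProbabilityMeasure Λ := by
      constructor
      rw [hΛ, Measure.smul_apply, smul_eq_mul, ENNReal.inv_mul_cancel hlam0 hlamtop]
    -- uniform bound for Λ
    have hinvpos : (0:ℝ) < ((lamb Set.univ)⁻¹).toReal :=
      ENNReal.toReal_pos (ENNReal.inv_ne_zero.mpr hlamtop) (ENNReal.inv_ne_top.mpr hlam0)
    have hΛdens : ∀ k, ∀ y ∈ B k, ∀ r : ℝ, 0 < r → r < 1 / (k+1) →
        ENNReal.ofReal (((lamb Set.univ)⁻¹).toReal * (1 / (k+1) / 2 ^ s) * r ^ s)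
          ≤ Λ (ball y r) := by
      intro k y hy r hr0 hrk
      rw [hΛ, Measure.smul_apply, smul_eq_mul]
      calc ENNReal.ofReal (((lamb Set.univ)⁻¹).toReal * (1 / (k+1) / 2 ^ s) * r ^ s)
          = (lamb Set.univ)⁻¹ * ENNReal.ofReal ((1 / (k+1) / 2 ^ s) * r ^ s) := by
            rw [mul_assoc, ENNReal.ofReal_mul hinvpos.le,
              ENNReal.ofReal_toReal (ENNReal.inv_ne_top.mpr hlam0)]
        _ ≤ (lamb Set.univ)⁻¹ * lamb (ball y r) :=
            mul_le_mul_right (hBdens k y hy r hr0 hrk) _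
    -- mixtures
    intro ν
    rw [mem_closure_iff_seq_limit]
    set t : ℕ → ℝ≥0∞ := fun j => ((j : ℝ≥0∞) + 2)⁻¹ with ht
    have ht0 : ∀ j, t j ≠ 0 := fun j =>
      ENNReal.inv_ne_zero.mpr
        (ENNReal.add_ne_top.mpr ⟨ENNReal.natCast_ne_top j, ENNReal.ofNat_ne_top⟩)
    have httop : ∀ j, t j ≠ ⊤ := fun j =>
      ENNReal.inv_ne_top.mpr (by simp)
    have ht1 : ∀ j, t j ≤ 1 := fun j =>
      ENNReal.inv_le_one.mpr (le_trans one_le_two le_add_self)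
    have htoReal : ∀ j, 0 < (t j).toReal := fun j =>
      ENNReal.toReal_pos (ht0 j) (httop j)
    set m : ℕ → Measure X := fun j => (1 - t j) • (ν : Measure X) + t j • Λ with hm
    have hmprob : ∀ j, IsProbabilityMeasure (m j) := by
      intro j
      constructor
      rw [hm]
      simp only [Measure.add_apply, Measure.smul_apply, smul_eq_mul]
      rw [measure_univ, measure_univ, mul_one, mul_one, tsub_add_cancel_of_le (ht1 j)]
    set μseq : ℕ → ProbabilityMeasure X := fun j => ⟨m j, hmprob j⟩ with hμseq
    have hmball : ∀ j (x : X) (r : ℝ), t j * Λ (ball x r) ≤ m j (ball x r) := by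
      intro j x r
      rw [hm]
      simp only [Measure.add_apply, Measure.smul_apply, smul_eq_mul]
      exact le_add_self
    -- each mixture is in every U k n
    have hmem : ∀ j k n, μseq j ∈ U k n := by
      intro j k n
      intro x hx
      set D : ℝ := (t j).toReal * (((lamb Set.univ)⁻¹).toReal * (1 / (k+1) / 2 ^ s)) with hD
      have hDpos : 0 < D := by
        apply mul_pos (htoReal j)
        apply mul_pos hinvpos
        have : (0:ℝ) < 2 ^ s := Real.rpow_pos_of_pos (by norm_num) s
        positivity
      set w : ℝ := min (1/2) (D/2) with hw
      have hwpos : 0 < w := by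
        apply lt_min (by norm_num)
        positivity
      set r : ℝ := min (1/(k+1)/2) (min (ε n / 2) (w ^ (n+1))) with hr
      have hrpos : 0 < r := by
        apply lt_min (by positivity)
        exact lt_min (by positivity) (by positivity)
      have hrk : r < 1/(k+1) := lt_of_le_of_lt (min_le_left _ _) (half_lt_self (by positivity))
      have hrε : r < ε n := lt_of_le_of_lt ((min_le_right _ _).trans (min_le_left _ _))
        (by have := hεpos n; linarith)
      have hrw : r ≤ w ^ (n+1) := (min_le_right _ _).trans (min_le_right _ _)
      -- the key exponent estimate
      have hkey : r ^ (ε n) < D := by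
        have h1 : r ^ (ε n) ≤ (w ^ (n+1)) ^ (ε n) :=
          Real.rpow_le_rpow hrpos.le hrw (hεpos n).le
        have h2 : (w ^ (n+1)) ^ (ε n) = w := by
          have : ε n = ((n+1 : ℕ) : ℝ)⁻¹ := by
            rw [hε]; push_cast; rw [one_div]
          rw [this]
          exact Real.pow_rpow_inv_natCast hwpos.le (Nat.succ_ne_zero n)
        have h3 : w ≤ D/2 := min_le_right _ _
        calc r ^ (ε n) ≤ w := h2 ▸ h1
          _ ≤ D/2 := h3
          _ < D := by linarith
      refine ⟨r, hrpos, hrε, ?_⟩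
      have hchain : ENNReal.ofReal (r ^ (s + ε n)) < ENNReal.ofReal (D * r ^ s) := by
        rw [ENNReal.ofReal_lt_ofReal_iff (by positivity)]
        rw [Real.rpow_add hrpos]
        calc r ^ s * r ^ (ε n) < r ^ s * D :=
          mul_lt_mul_of_pos_left hkey (Real.rpow_pos_of_pos hrpos s)
          _ = D * r ^ s := mul_comm _ _
      refine lt_of_lt_of_le hchain ?_
      calc ENNReal.ofReal (D * r ^ s)
          = t j * ENNReal.ofReal ((((lamb Set.univ)⁻¹).toReal * (1 / (k+1) / 2 ^ s)) * r ^ s) := by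
            rw [hD, mul_assoc, ENNReal.ofReal_mul (htoReal j).le,
              ENNReal.ofReal_toReal (httop j)]
        _ ≤ t j * Λ (ball x r) := by
            apply mul_le_mul_right
            exact hΛdens k x hx r hrpos hrk
        _ ≤ m j (ball x r) := hmball j x r
    refine ⟨μseq, fun j => Set.mem_iInter.mpr fun k => Set.mem_iInter.mpr fun n => hmem j k n, ?_⟩
    -- convergence of the mixtures to ν
    rw [MeasureTheory.ProbabilityMeasure.tendsto_iff_forall_lintegral_tendsto]
    intro f
    have hIν : ∫⁻ ω, f ω ∂(ν : Measure X) ≠ ⊤ := (f.lintegral_lt_top_of_nnreal _).ne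
    have hIΛ : ∫⁻ ω, f ω ∂Λ ≠ ⊤ := (f.lintegral_lt_top_of_nnreal _).ne
    have heq : ∀ j, ∫⁻ ω, f ω ∂((μseq j : Measure X))
        = (1 - t j) * ∫⁻ ω, f ω ∂(ν : Measure X) + t j * ∫⁻ ω, f ω ∂Λ := by
      intro j
      show ∫⁻ ω, f ω ∂(m j) = _
      rw [hm, lintegral_add_measure, lintegral_smul_measure, lintegral_smul_measure, smul_eq_mul, smul_eq_mul]
    simp only [heq]
    have htt : Tendsto t atTop (𝓝 0) := by
      have h1 : Tendsto (fun j : ℕ => (j : ℝ≥0∞) + 2) atTop (𝓝 ⊤) := by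
        rw [ENNReal.tendsto_nhds_top_iff_nat]
        intro N
        filter_upwards [Filter.eventually_ge_atTop N] with j hj
        calc (N : ℝ≥0∞) ≤ (j : ℝ≥0∞) := by exact_mod_cast Nat.cast_le.mpr hj
          _ < (j : ℝ≥0∞) + 2 := ENNReal.lt_add_right (ENNReal.natCast_ne_top j) (by norm_num)
      have h2 := ENNReal.tendsto_inv_iff.mpr h1
      simpa [ht] using h2
    have h2 : Tendsto (fun j => (1 - t j) * ∫⁻ ω, f ω ∂(ν : Measure X)) atTop
        (𝓝 (∫⁻ ω, f ω ∂(ν : Measure X))) := by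
      have hsub : Tendsto (fun j => 1 - t j) atTop (𝓝 1) := by
        have := ENNReal.Tendsto.sub (tendsto_const_nhds (x := (1:ℝ≥0∞))) htt
          (Or.inl ENNReal.one_ne_top)
        simpa using this
      have := ENNReal.Tendsto.mul_const hsub (Or.inl one_ne_zero)
        (b := ∫⁻ ω, f ω ∂(ν : Measure X))
      simpa using this
    have h3 : Tendsto (fun j => t j * ∫⁻ ω, f ω ∂Λ) atTop (𝓝 0) := by
      have := ENNReal.Tendsto.mul_const htt (Or.inr hIΛ) (b := ∫⁻ ω, f ω ∂Λ)
      simpa using this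
    have := h2.add h3
    simpa using this
  · -- Gδ
    exact IsGδ.iInter fun k => IsGδ.iInter fun n => (hUopen k n).isGδ
  · -- the Hölder exponent bound
    intro μ hμ x hx
    obtain ⟨k, hk⟩ := hAB x hx
    have hμk : ∀ n, μ ∈ U k n := fun n =>
      Set.mem_iInter.mp (Set.mem_iInter.mp hμ k) n
    rw [holderExp, Filter.liminf_eq]
    apply Real.sSup_le _ hs.le
    intro b hb
    simp only [Set.mem_setOf_eq] at hb
    by_contra hbs
    push_neg at hbs
    -- b > s; find a contradiction
    rw [eventually_nhdsWithin_iff, Metric.eventually_nhds_iff] at hb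
    obtain ⟨δ', hδ'pos, hδ'⟩ := hb
    obtain ⟨n, hn⟩ := exists_nat_gt (max (1/δ') (max (1/(b - s)) 1))
    have hεδ : ε n < δ' := by
      have h1 : 1/δ' < (n:ℝ) := lt_of_le_of_lt (le_max_left _ _) hn
      rw [div_lt_iff₀ hδ'pos] at h1
      simp only [hε]
      rw [div_lt_iff₀ (by positivity)]
      nlinarith [hδ'pos]
    have hεb : s + ε n < b := by
      have hbs' : (0:ℝ) < b - s := by linarith
      have h1 : 1/(b-s) < (n:ℝ) :=
        lt_of_le_of_lt ((le_max_left _ _).trans (le_max_right _ _)) hn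
      rw [div_lt_iff₀ hbs'] at h1
      have h2 : 1/((n:ℝ)+1) < b - s := by
        rw [div_lt_iff₀ (by positivity)]
        nlinarith
      simp only [hε]
      linarith
    have hε1 : ε n ≤ 1 := by
      simp only [hε]
      rw [div_le_one (by positivity)]
      linarith [Nat.cast_nonneg (α := ℝ) n]
    obtain ⟨r, hr0, hrε, hrμ⟩ := hμk n x hk
    have hr1 : r < 1 := lt_of_lt_of_le hrε hε1
    have hrδ : r < δ' := lt_trans hrε hεδ
    -- b ≤ f r
    have hfr := hδ' (y := r) (by rw [Real.dist_eq, sub_zero, abs_of_pos hr0]; exact hrδ) hr0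
    -- but f r < s + ε n
    have hμtop : (μ : Measure X) (ball x r) ≠ ⊤ := measure_ne_top _ _
    have hμr : r ^ (s + ε n) < ((μ : Measure X) (ball x r)).toReal := by
      rw [← ENNReal.ofReal_lt_iff_lt_toReal (by positivity) hμtop]
      exact hrμ
    have hμpos : 0 < ((μ : Measure X) (ball x r)).toReal :=
      lt_trans (Real.rpow_pos_of_pos hr0 _) hμr
    have hlogr : Real.log r < 0 := Real.log_neg hr0 hr1
    have hlog : (s + ε n) * Real.log r < Real.log ((μ : Measure X) (ball x r)).toReal := by
      rw [← Real.log_rpow hr0]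
      exact Real.log_lt_log (Real.rpow_pos_of_pos hr0 _) hμr
    have hfrlt : Real.log ((μ : Measure X) (ball x r)).toReal / Real.log r < s + ε n := by
      rw [div_lt_iff_of_neg hlogr]
      exact hlog
    linarith [hfr, hfrlt, hεb]

end DensityAux

/-- If `A ⊆ K` and a finite Borel measure `λ` on `K` has positive lower `s`-density
at every point of `A`, then typical probability measures `μ` on `K` satisfy
`h_μ(x) ≤ s` for all `x ∈ A`; equivalently `E_μ(h) ∩ A = ∅` for all `h > s`. -/
theorem typical_holder_exponent_le_density_exponent
    (d : ℕ) (K A : Set (EuclideanSpace ℝ (Fin d))) (hK : IsCompact K) (hA : A ⊆ K)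
    (s : ℝ) (hs : 0 < s) (hsd : s ≤ d)
    (lam : Measure (EuclideanSpace ℝ (Fin d))) [IsFiniteMeasure lam]
    (hlamK : lam Kᶜ = 0)
    (hdens : ∀ a ∈ A, 0 < lowerDensity K a lam s) :
    ∃ Ω : Set (ProbabilityMeasure K), Dense Ω ∧ IsGδ Ω ∧
      ∀ μ ∈ Ω, (∀ x (hx : x ∈ A), holderExp (μ : Measure K) ⟨x, hA hx⟩ ≤ s) ∧
        ∀ h > s, {x : K | holderExp (μ : Measure K) x = h} ∩ {x : K | (x : EuclideanSpace ℝ (Fin d)) ∈ A} = ∅ := by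
  classical
  haveI : CompactSpace ↥K := isCompact_iff_compactSpace.mp hK
  have hKm : MeasurableSet K := hK.isClosed.measurableSet
  set lamb : Measure ↥K := Measure.comap (↑) lam with hlamb
  have hemb : MeasurableEmbedding ((↑) : ↥K → EuclideanSpace ℝ (Fin d)) :=
    MeasurableEmbedding.subtype_coe hKm
  have hcomap : ∀ (x : ↥K) (r : ℝ), lamb (ball x r) = lam (K ∩ ball (x : EuclideanSpace ℝ (Fin d)) r) := by
    intro x r
    have hball : ball x r = ((↑) : ↥K → EuclideanSpace ℝ (Fin d)) ⁻¹' ball (x : EuclideanSpace ℝ (Fin d)) r := by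
      ext y
      simp [mem_ball, Subtype.dist_eq]
    rw [hball, hemb.comap_apply, Subtype.image_preimage_coe, Set.inter_comm]
  haveI : IsFiniteMeasure lamb := by
    constructor
    rw [hlamb]
    rw [hemb.comap_apply]
    exact lt_of_le_of_lt (measure_mono (Set.subset_univ _)) (measure_lt_top lam _)
  set A' : Set ↥K := {x : ↥K | (x : EuclideanSpace ℝ (Fin d)) ∈ A} with hA'
  have hdens' : ∀ a ∈ A', ∃ C : ℝ, 0 < C ∧ ∃ δ : ℝ, 0 < δ ∧ ∀ r : ℝ, 0 < r → r < δ →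
      ENNReal.ofReal (C * r ^ s) ≤ lamb (ball a r) := by
    intro a ha
    have hpos := hdens (a : EuclideanSpace ℝ (Fin d)) ha
    set L := lowerDensity K (a : EuclideanSpace ℝ (Fin d)) lam s with hL
    have hbdd : Filter.IsBoundedUnder (· ≥ ·) (𝓝[>] (0:ℝ))
        (fun r : ℝ => (lam (K ∩ ball (a : EuclideanSpace ℝ (Fin d)) r)).toReal / (2 * r) ^ s) := by
      refine ⟨0, ?_⟩
      rw [Filter.eventually_map]
      filter_upwards [self_mem_nhdsWithin] with r hr
      have : (0:ℝ) < (2*r) ^ s := Real.rpow_pos_of_pos (by simp at hr; linarith) s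
      positivity
    have hev := Filter.eventually_lt_of_lt_liminf (show L/2 < L by linarith) hbdd
    refine ⟨L/2, by linarith, ?_⟩
    rw [eventually_nhdsWithin_iff, Metric.eventually_nhds_iff] at hev
    obtain ⟨δ, hδpos, hδ⟩ := hev
    refine ⟨δ, hδpos, fun r hr0 hrδ => ?_⟩
    have h1 := hδ (y := r) (by rw [Real.dist_eq, sub_zero, abs_of_pos hr0]; exact hrδ) hr0
    rw [hcomap]
    apply ENNReal.ofReal_le_of_le_toReal
    have h2pos : (0:ℝ) < (2*r) ^ s := Real.rpow_pos_of_pos (by linarith) s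
    rw [lt_div_iff₀ h2pos] at h1
    have h3 : r ^ s ≤ (2*r) ^ s := Real.rpow_le_rpow hr0.le (by linarith) hs.le
    nlinarith [h1, h3]
  obtain ⟨Ω, hΩdense, hΩGδ, hΩ⟩ := DensityAux.exists_dense_Gdelta A' s hs lamb hdens'
  refine ⟨Ω, hΩdense, hΩGδ, fun μ hμ => ⟨fun x hx => hΩ μ hμ ⟨x, hA hx⟩ hx, ?_⟩⟩
  intro h hh
  rw [Set.eq_empty_iff_forall_notMem]
  rintro x ⟨hx1, hx2⟩
  have := hΩ μ hμ x hx2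
  simp only [Set.mem_setOf_eq] at hx1
  rw [hx1] at this
  linarith
end

section
/- Let K ⊂ ℝ^d be compact and let s be the upper box-counting dimension of K. Then there exists a dense G_δ set Ω in M(K) such that for every μ ∈ Ω and every x ∈ K, h_μ(x) ≤ s. In particular, for all μ ∈ Ω and h > s, the level set E_μ(h) = {x ∈ K : h_μ(x) = h} is empty. -/
open MeasureTheory Metric Filter Topology Set
open scoped ENNReal NNReal BoundedContinuousFunction

set_option linter.unusedSectionVars false
set_option linter.unusedVariables false
set_option maxHeartbeats 1000000

/-- `N_r(E)`: the largest number of disjoint open balls of radius `r` with centers in `E`. -/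
noncomputable def packingNumber {X : Type*} [MetricSpace X] (E : Set X) (r : ℝ) : ℕ :=
  sSup {n : ℕ | ∃ t : Fin n → X, (∀ i, t i ∈ E) ∧
    Pairwise fun i j => Disjoint (ball (t i) r) (ball (t j) r)}

/-- The upper box-counting dimension `limsup_{r→0} log N_r(E) / (-log r)`. -/
noncomputable def upperBoxDim {X : Type*} [MetricSpace X] (E : Set X) : ℝ :=
  limsup (fun r : ℝ => Real.log (packingNumber E r) / (-Real.log r)) (𝓝[>] 0)

section EuclideanLemmas

variable {d : ℕ}

/-- The packing set. -/
def packSet (K : Set (EuclideanSpace ℝ (Fin d))) (r : ℝ) : Set ℕ :=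
  {n : ℕ | ∃ t : Fin n → EuclideanSpace ℝ (Fin d), (∀ i, t i ∈ K) ∧
    Pairwise fun i j => Disjoint (ball (t i) r) (ball (t j) r)}

lemma vol_count {K : Set (EuclideanSpace ℝ (Fin d))} {D : ℝ} (hD : 0 ≤ D)
    (hKD : K ⊆ closedBall 0 D) {r : ℝ} (hr : 0 < r) (hr1 : r ≤ 1) {n : ℕ}
    (hn : n ∈ packSet K r) : (n : ℝ) ≤ (D + 1) ^ d / r ^ d := by
  obtain ⟨t, htK, htd⟩ := hn
  rcases Nat.eq_zero_or_pos d with hd | hd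
  · subst hd
    have hn1 : n ≤ 1 := by
      by_contra hn2
      push_neg at hn2
      have h01 : (⟨0, by omega⟩ : Fin n) ≠ ⟨1, by omega⟩ := by
        simp [Fin.ext_iff]
      have hdisj : Disjoint (ball (t ⟨0, by omega⟩) r) (ball (t ⟨1, by omega⟩) r) := htd h01
      rw [Subsingleton.elim (t ⟨1, by omega⟩) (t ⟨0, by omega⟩)] at hdisj
      rw [disjoint_self] at hdisj
      exact (Metric.nonempty_ball.2 hr).ne_empty hdisj
    simp only [pow_zero]
    calc (n:ℝ) ≤ 1 := by exact_mod_cast hn1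
      _ = 1 / 1 := by norm_num
  have : Nonempty (Fin d) := ⟨⟨0, hd⟩⟩
  set c : ℝ≥0∞ := ENNReal.ofReal (Real.sqrt Real.pi ^ d / Real.Gamma ((d : ℝ) / 2 + 1)) with hc
  have hcpos : 0 < c := by
    rw [hc]
    apply ENNReal.ofReal_pos.2
    have hg := Real.Gamma_pos_of_pos (show (0:ℝ) < (d:ℝ)/2+1 by positivity)
    positivity
  have hvol : ∀ i : Fin n, volume (ball (t i) r) = ENNReal.ofReal r ^ d * c := by
    intro i
    rw [hc, EuclideanSpace.volume_ball, Fintype.card_fin]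
  have hsub : (⋃ i, ball (t i) r) ⊆ closedBall (0 : EuclideanSpace ℝ (Fin d)) (D + 1) := by
    refine Set.iUnion_subset fun i y hy => ?_
    have h1 : dist y (t i) < r := mem_ball.1 hy
    have h2 : dist (t i) 0 ≤ D := hKD (htK i)
    have := dist_triangle y (t i) 0
    simp only [mem_closedBall]
    linarith
  have hmeas : volume (⋃ i, ball (t i) r) = ∑' i : Fin n, volume (ball (t i) r) :=
    measure_iUnion htd fun i => measurableSet_ball
  have key : (n : ℝ≥0∞) * (ENNReal.ofReal r ^ d * c) ≤ ENNReal.ofReal (D + 1) ^ d * c := by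
    calc (n : ℝ≥0∞) * (ENNReal.ofReal r ^ d * c)
        = ∑' i : Fin n, volume (ball (t i) r) := by
          rw [tsum_fintype]
          simp [hvol, Finset.sum_const, Finset.card_univ, nsmul_eq_mul]
      _ = volume (⋃ i, ball (t i) r) := hmeas.symm
      _ ≤ volume (closedBall (0 : EuclideanSpace ℝ (Fin d)) (D + 1)) := measure_mono hsub
      _ = ENNReal.ofReal (D + 1) ^ d * c := by
          rw [hc, EuclideanSpace.volume_closedBall, Fintype.card_fin]
  have key2 : (n : ℝ≥0∞) * ENNReal.ofReal r ^ d ≤ ENNReal.ofReal (D + 1) ^ d := by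
    rw [← ENNReal.mul_le_mul_iff_left hcpos.ne' (by rw [hc]; exact ENNReal.ofReal_ne_top)]
    calc (n : ℝ≥0∞) * ENNReal.ofReal r ^ d * c = (n : ℝ≥0∞) * (ENNReal.ofReal r ^ d * c) := by ring
      _ ≤ ENNReal.ofReal (D + 1) ^ d * c := key
  have key3 : (n : ℝ) * r ^ d ≤ (D + 1) ^ d := by
    have h1 : ((n : ℝ≥0∞) * ENNReal.ofReal r ^ d).toReal ≤ (ENNReal.ofReal (D + 1) ^ d).toReal :=
      ENNReal.toReal_mono (ENNReal.pow_ne_top ENNReal.ofReal_ne_top) key2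
    rwa [ENNReal.toReal_mul, ENNReal.toReal_pow, ENNReal.toReal_pow, ENNReal.toReal_natCast,
      ENNReal.toReal_ofReal hr.le, ENNReal.toReal_ofReal (by linarith)] at h1
  rw [le_div_iff₀ (by positivity)]
  exact key3


lemma packingNumber_eq (K : Set (EuclideanSpace ℝ (Fin d))) (r : ℝ) :
    packingNumber K r = sSup (packSet K r) := rfl

lemma zero_mem_packSet (K : Set (EuclideanSpace ℝ (Fin d))) (r : ℝ) : 0 ∈ packSet K r :=
  ⟨Fin.elim0, fun i => i.elim0, fun i => i.elim0⟩

lemma packSet_anti (K : Set (EuclideanSpace ℝ (Fin d))) {r r' : ℝ} (h : r' ≤ r) :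
    packSet K r ⊆ packSet K r' := by
  rintro n ⟨t, htK, htd⟩
  exact ⟨t, htK, fun i j hij =>
    (htd hij).mono (ball_subset_ball h) (ball_subset_ball h)⟩

lemma bddAbove_packSet {K : Set (EuclideanSpace ℝ (Fin d))} (hKb : Bornology.IsBounded K)
    {r : ℝ} (hr : 0 < r) : BddAbove (packSet K r) := by
  obtain ⟨D, hD⟩ := hKb.subset_closedBall 0
  have hD0 : K ⊆ closedBall 0 (max D 0) := hD.trans (closedBall_subset_closedBall (le_max_left _ _))
  set r' := min r 1 with hr'
  have hr'0 : 0 < r' := lt_min hr one_pos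
  refine ⟨⌈(max D 0 + 1) ^ d / r' ^ d⌉₊, fun n hn => ?_⟩
  have := vol_count (le_max_right D 0) hD0 hr'0 (min_le_right r 1)
    (packSet_anti K (min_le_left r 1) hn)
  exact_mod_cast this.trans (Nat.le_ceil _)

lemma packingNumber_mem {K : Set (EuclideanSpace ℝ (Fin d))} (hKb : Bornology.IsBounded K)
    {r : ℝ} (hr : 0 < r) : packingNumber K r ∈ packSet K r := by
  rw [packingNumber_eq]
  exact Nat.sSup_mem ⟨0, zero_mem_packSet K r⟩ (bddAbove_packSet hKb hr)

lemma one_le_packingNumber {K : Set (EuclideanSpace ℝ (Fin d))} (hKb : Bornology.IsBounded K)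
    (hne : K.Nonempty) {r : ℝ} (hr : 0 < r) : 1 ≤ packingNumber K r := by
  obtain ⟨x0, hx0⟩ := hne
  rw [packingNumber_eq]
  refine le_csSup (bddAbove_packSet hKb hr) ⟨fun _ => x0, fun _ => hx0, ?_⟩
  intro i j hij
  exact absurd (Subsingleton.elim i j) hij

/-- A maximal `r/2`-packing yields an `r`-net of size `packingNumber K (r/2)`. -/
lemma exists_net {K : Set (EuclideanSpace ℝ (Fin d))} (hKb : Bornology.IsBounded K)
    {r : ℝ} (hr : 0 < r) :
    ∃ F : Finset (EuclideanSpace ℝ (Fin d)), ↑F ⊆ K ∧ F.card ≤ packingNumber K (r / 2) ∧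
      ∀ x ∈ K, ∃ p ∈ F, dist x p < r := by
  classical
  have hr2 : 0 < r / 2 := by linarith
  set N := packingNumber K (r / 2) with hN
  obtain ⟨t, htK, htd⟩ := packingNumber_mem hKb hr2
  refine ⟨Finset.image t Finset.univ, ?_, ?_, ?_⟩
  · intro p hp
    simp only [Finset.coe_image, Finset.coe_univ, Set.image_univ] at hp
    obtain ⟨i, rfl⟩ := hp
    exact htK i
  · exact (Finset.card_image_le).trans (by simp [hN])
  · intro x hx
    by_contra hcon
    push_neg at hcon
    have hfar : ∀ i, r ≤ dist x (t i) := by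
      intro i
      have := hcon (t i) (Finset.mem_image_of_mem t (Finset.mem_univ i))
      linarith [this]
    set t' : Fin (N + 1) → EuclideanSpace ℝ (Fin d) :=
      fun i => if h : (i : ℕ) < N then t ⟨i, h⟩ else x with ht'
    have hmem : (N + 1) ∈ packSet K (r / 2) := by
      refine ⟨t', fun i => ?_, fun i j hij => ?_⟩
      · by_cases h : (i : ℕ) < N
        · simp only [ht', dif_pos h]; exact htK _
        · simp only [ht', dif_neg h]; exact hx
      · by_cases h1 : (i : ℕ) < N <;> by_cases h2 : (j : ℕ) < N
        · simp only [ht', dif_pos h1, dif_pos h2]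
          refine htd ?_
          simp only [ne_eq, Fin.ext_iff] at hij ⊢
          exact hij
        · simp only [ht', dif_pos h1, dif_neg h2]
          exact ball_disjoint_ball (by linarith [hfar ⟨i, h1⟩, dist_comm x (t ⟨i, h1⟩)])
        · simp only [ht', dif_neg h1, dif_pos h2]
          exact ball_disjoint_ball (by linarith [hfar ⟨j, h2⟩])
        · exfalso
          apply hij
          have hi : (i : ℕ) = N := by omega
          have hj : (j : ℕ) = N := by omega
          exact Fin.ext (hi.trans hj.symm)
    have : N + 1 ≤ N := by
      rw [hN, packingNumber_eq]
      exact le_csSup (bddAbove_packSet hKb hr2) hmem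
    omega


lemma f_bounded {K : Set (EuclideanSpace ℝ (Fin d))} (hKb : Bornology.IsBounded K)
    (hne : K.Nonempty) :
    IsBoundedUnder (· ≤ ·) (𝓝[>] (0:ℝ))
      (fun r => Real.log (packingNumber K r) / (-Real.log r)) := by
  obtain ⟨D₀, hD₀⟩ := hKb.subset_closedBall 0
  set D := max D₀ 0 with hD
  have hKD : K ⊆ closedBall 0 D := hD₀.trans (closedBall_subset_closedBall (le_max_left _ _))
  have hD0 : 0 ≤ D := le_max_right _ _
  set C : ℝ := (D + 1) ^ d with hC
  have hC1 : 1 ≤ C := one_le_pow₀ (by linarith)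
  have hlogC : 0 ≤ Real.log C := Real.log_nonneg hC1
  have hlog2 : 0 < Real.log 2 := Real.log_pos one_lt_two
  refine ⟨Real.log C / Real.log 2 + d, ?_⟩
  simp only [eventually_map]
  filter_upwards [Ioo_mem_nhdsGT_of_mem (by norm_num : (0:ℝ) ∈ Ico (0:ℝ) (1/2))]
    with r hr
  obtain ⟨hr0, hr12⟩ := hr
  have hNpos : (1:ℕ) ≤ packingNumber K r := one_le_packingNumber hKb hne hr0
  have hNR : (packingNumber K r : ℝ) ≤ C / r ^ d :=
    vol_count hD0 hKD hr0 (by linarith) (packingNumber_mem hKb hr0)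
  have hlr : Real.log 2 ≤ -Real.log r := by
    have : Real.log r < Real.log (1/2) := Real.log_lt_log hr0 hr12
    rw [one_div, Real.log_inv] at this
    linarith
  have hlrpos : 0 < -Real.log r := lt_of_lt_of_le hlog2 hlr
  have hlogN : Real.log (packingNumber K r) ≤ Real.log C + d * (-Real.log r) := by
    have h1 : Real.log (packingNumber K r) ≤ Real.log (C / r ^ d) := by
      apply Real.log_le_log (by exact_mod_cast hNpos) hNR
    rw [Real.log_div (by linarith) (by positivity), Real.log_pow, Real.log_pow] at h1
    rw [hC, Real.log_pow]
    linarith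
  calc Real.log (packingNumber K r) / (-Real.log r)
      ≤ (Real.log C + d * (-Real.log r)) / (-Real.log r) := by gcongr
    _ = Real.log C / (-Real.log r) + d := by
        rw [add_div, mul_div_assoc, div_self hlrpos.ne']
        ring
    _ ≤ Real.log C / Real.log 2 + d := by gcongr

lemma upperBoxDim_nonneg {K : Set (EuclideanSpace ℝ (Fin d))} (hKb : Bornology.IsBounded K)
    (hne : K.Nonempty) : 0 ≤ upperBoxDim K := by
  refine le_limsup_of_frequently_le ?_ (f_bounded hKb hne)
  refine (Filter.Eventually.frequently ?_)
  filter_upwards [Ioo_mem_nhdsGT_of_mem (by norm_num : (0:ℝ) ∈ Ico (0:ℝ) 1)] with r hr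
  obtain ⟨hr0, hr1⟩ := hr
  have hN : (1:ℕ) ≤ packingNumber K r := one_le_packingNumber hKb hne hr0
  have h1 : 0 ≤ Real.log (packingNumber K r) := Real.log_nonneg (by exact_mod_cast hN)
  have h2 : 0 < -Real.log r := by
    have := Real.log_neg hr0 hr1
    linarith
  positivity

lemma eventually_net {K : Set (EuclideanSpace ℝ (Fin d))} (hKb : Bornology.IsBounded K)
    (hne : K.Nonempty) {η : ℝ} (hη : 0 < η) :
    ∀ᶠ r in 𝓝[>] (0:ℝ), ∃ F : Finset (EuclideanSpace ℝ (Fin d)), ↑F ⊆ K ∧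
      (∀ x ∈ K, ∃ p ∈ F, dist x p < r) ∧ (F.card : ℝ) ≤ r ^ (-(upperBoxDim K + η)) := by
  set s := upperBoxDim K with hs
  have hs0 : 0 ≤ s := upperBoxDim_nonneg hKb hne
  have h1 : ∀ᶠ r in 𝓝[>] (0:ℝ),
      Real.log (packingNumber K r) / (-Real.log r) < s + η/2 := by
    apply eventually_lt_of_limsup_lt _ (f_bounded hKb hne)
    show upperBoxDim K < s + η / 2
    rw [← hs]
    linarith
  have h3 : ∀ᶠ r in 𝓝[>] (0:ℝ), (packingNumber K r : ℝ) ≤ r ^ (-(s + η/2)) := by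
    filter_upwards [h1, Ioo_mem_nhdsGT_of_mem (by norm_num : (0:ℝ) ∈ Ico (0:ℝ) 1)]
      with r hfr hr
    obtain ⟨hr0, hr1⟩ := hr
    have hlrpos : 0 < -Real.log r := by
      have := Real.log_neg hr0 hr1
      linarith
    have hlogN : Real.log (packingNumber K r) < (s + η/2) * (-Real.log r) := by
      rw [div_lt_iff₀ hlrpos] at hfr
      exact hfr
    have hNpos : (0:ℝ) < packingNumber K r := by
      exact_mod_cast one_le_packingNumber hKb hne hr0
    calc (packingNumber K r : ℝ) = Real.exp (Real.log (packingNumber K r)) :=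
          (Real.exp_log hNpos).symm
      _ ≤ Real.exp ((s + η/2) * (-Real.log r)) := Real.exp_le_exp.2 hlogN.le
      _ = r ^ (-(s + η/2)) := by
          rw [Real.rpow_def_of_pos hr0]
          ring_nf
  have htendsto : Tendsto (fun r : ℝ => r / 2) (𝓝[>] 0) (𝓝[>] 0) := by
    rw [tendsto_nhdsWithin_iff]
    constructor
    · have : Tendsto (fun r : ℝ => r / 2) (𝓝 0) (𝓝 (0 / 2)) := tendsto_id.div_const 2
      simpa using this.mono_left nhdsWithin_le_nhds
    · exact eventually_mem_nhdsWithin.mono fun r hr => mem_Ioi.2 (half_pos hr)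
  have h4 := htendsto.eventually h3
  set t0 : ℝ := (2:ℝ) ^ (-(2/η) * (s + η/2)) with ht0
  have ht0pos : 0 < t0 := Real.rpow_pos_of_pos two_pos _
  filter_upwards [h4, Ioo_mem_nhdsGT_of_mem
    (show (0:ℝ) ∈ Ico (0:ℝ) (min t0 1) from ⟨le_refl _, lt_min ht0pos one_pos⟩)]
    with r hcard hr
  obtain ⟨hr0, hrm⟩ := hr
  have hrt0 : r < t0 := hrm.trans_le (min_le_left _ _)
  have hr1 : r < 1 := hrm.trans_le (min_le_right _ _)
  obtain ⟨F, hFK, hFcard, hFnet⟩ := exists_net hKb hr0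
  refine ⟨F, hFK, hFnet, ?_⟩
  have step1 : (F.card : ℝ) ≤ (r/2) ^ (-(s + η/2)) := by
    calc (F.card : ℝ) ≤ (packingNumber K (r/2) : ℝ) := by exact_mod_cast hFcard
      _ ≤ (r/2) ^ (-(s + η/2)) := hcard
  have step2 : (r/2) ^ (-(s + η/2)) ≤ r ^ (-(s + η)) := by
    have hsplit : (r/2 : ℝ) ^ (-(s + η/2)) = r ^ (-(s + η/2)) * (2:ℝ) ^ (s + η/2) := by
      rw [div_eq_mul_inv, Real.mul_rpow hr0.le (by norm_num),
        Real.inv_rpow (by norm_num : (0:ℝ) ≤ 2), ← Real.rpow_neg (by norm_num : (0:ℝ) ≤ 2),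
        neg_neg]
    have hsplit2 : r ^ (-(s + η)) = r ^ (-(s + η/2)) * r ^ (-(η/2)) := by
      rw [← Real.rpow_add hr0]
      ring_nf
    have hkey : (2:ℝ) ^ (s + η/2) ≤ r ^ (-(η/2)) := by
      have hlt : r ^ (-(η/2)) > t0 ^ (-(η/2)) := by
        apply Real.rpow_lt_rpow_of_neg hr0 hrt0 (by linarith)
      have ht0e : t0 ^ (-(η/2)) = (2:ℝ) ^ (s + η/2) := by
        rw [ht0, ← Real.rpow_mul (by norm_num : (0:ℝ) ≤ 2)]
        congr 1
        field_simp
      linarith [hlt, ht0e.symm.le]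
    calc (r/2 : ℝ) ^ (-(s + η/2)) = r ^ (-(s + η/2)) * (2:ℝ) ^ (s + η/2) := hsplit
      _ ≤ r ^ (-(s + η/2)) * r ^ (-(η/2)) := by
          apply mul_le_mul_of_nonneg_left hkey (Real.rpow_nonneg hr0.le _)
      _ = r ^ (-(s + η)) := hsplit2.symm
  linarith

end EuclideanLemmas

section AbstractLemmas

variable {X : Type*} [MetricSpace X] [MeasurableSpace X] [OpensMeasurableSpace X]

lemma lint_ne_top (ν : ProbabilityMeasure X) (f : X →ᵇ ℝ≥0) :
    ∫⁻ x, (f x : ℝ≥0∞) ∂(ν : Measure X) ≠ ∞ :=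
  (f.lintegral_lt_top_of_nnreal (μ := (ν : Measure X))).ne

lemma isOpen_lint_gt (f : X →ᵇ ℝ≥0) (c : ℝ≥0∞) :
    IsOpen {ν : ProbabilityMeasure X | c < ∫⁻ x, (f x : ℝ≥0∞) ∂(ν : Measure X)} := by
  have hcont : Continuous fun ν : ProbabilityMeasure X =>
      ((ν.toFiniteMeasure.testAgainstNN f : ℝ≥0) : ℝ≥0∞) :=
    ENNReal.continuous_coe.comp (ProbabilityMeasure.continuous_testAgainstNN_eval f)
  have heq : ∀ ν : ProbabilityMeasure X,
      ((ν.toFiniteMeasure.testAgainstNN f : ℝ≥0) : ℝ≥0∞)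
        = ∫⁻ x, (f x : ℝ≥0∞) ∂(ν : Measure X) := fun ν =>
    FiniteMeasure.testAgainstNN_coe_eq
  have : {ν : ProbabilityMeasure X | c < ∫⁻ x, (f x : ℝ≥0∞) ∂(ν : Measure X)}
      = (fun ν : ProbabilityMeasure X => ((ν.toFiniteMeasure.testAgainstNN f : ℝ≥0) : ℝ≥0∞))
        ⁻¹' (Ioi c) := by
    ext ν
    simp [heq ν]
  rw [this]
  exact isOpen_Ioi.preimage hcont

omit [MeasurableSpace X] [OpensMeasurableSpace X] in
lemma thickening_ball_subset (p : X) (r : ℝ) :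
    thickening r (ball p r) ⊆ ball p (2 * r) := by
  intro x hx
  rw [mem_thickening_iff] at hx
  obtain ⟨z, hz, hxz⟩ := hx
  rw [mem_ball] at hz ⊢
  have := dist_triangle x z p
  linarith

lemma lint_thickenedIndicator_le (ν : Measure X) {p : X} {r : ℝ} (hr : 0 < r) :
    ∫⁻ x, (thickenedIndicator hr (ball p r) x : ℝ≥0∞) ∂ν ≤ ν (ball p (2 * r)) := by
  have hb : ∀ x, (thickenedIndicator hr (ball p r) x : ℝ≥0∞)
      ≤ (ball p (2 * r)).indicator (fun _ => (1 : ℝ≥0∞)) x := by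
    intro x
    by_cases hx : x ∈ ball p (2 * r)
    · rw [Set.indicator_of_mem hx]
      exact_mod_cast thickenedIndicator_le_one hr (ball p r) x
    · rw [Set.indicator_of_notMem hx]
      have hx2 : x ∉ thickening r (ball p r) := fun h => hx (thickening_ball_subset p r h)
      rw [thickenedIndicator_zero hr (ball p r) hx2]
      simp
  calc ∫⁻ x, (thickenedIndicator hr (ball p r) x : ℝ≥0∞) ∂ν
      ≤ ∫⁻ x, (ball p (2 * r)).indicator (fun _ => (1 : ℝ≥0∞)) x ∂ν := lintegral_mono hb
    _ = ν (ball p (2 * r)) := by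
        rw [lintegral_indicator measurableSet_ball]
        simp


/-- The basic open sets whose countable intersection is the residual set. -/
noncomputable def goodSet (X : Type*) [MetricSpace X] [MeasurableSpace X] (s : ℝ) (n : ℕ) :
    Set (ProbabilityMeasure X) :=
  ⋃ (r : ℝ) (hr : 0 < r ∧ r < min (((n : ℝ) + 1)⁻¹) (1/3)) (F : Finset X)
    (_ : ∀ x : X, ∃ p ∈ F, dist x p < r),
    {ν : ProbabilityMeasure X | ∀ p ∈ F,
      ENNReal.ofReal (r ^ (s + ((n : ℝ) + 1)⁻¹)) <
        ∫⁻ x, (thickenedIndicator hr.1 (ball p r) x : ℝ≥0∞) ∂(ν : Measure X)}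

lemma isOpen_goodSet (s : ℝ) (n : ℕ) : IsOpen (goodSet X s n) := by
  apply isOpen_iUnion
  intro r
  apply isOpen_iUnion
  intro hr
  apply isOpen_iUnion
  intro F
  apply isOpen_iUnion
  intro _
  have : {ν : ProbabilityMeasure X | ∀ p ∈ F,
      ENNReal.ofReal (r ^ (s + ((n : ℝ) + 1)⁻¹)) <
        ∫⁻ x, (thickenedIndicator hr.1 (ball p r) x : ℝ≥0∞) ∂(ν : Measure X)}
      = ⋂ p ∈ F, {ν : ProbabilityMeasure X |
          ENNReal.ofReal (r ^ (s + ((n : ℝ) + 1)⁻¹)) <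
            ∫⁻ x, (thickenedIndicator hr.1 (ball p r) x : ℝ≥0∞) ∂(ν : Measure X)} := by
    ext ν
    simp
  rw [this]
  exact isOpen_biInter_finset fun p _ => isOpen_lint_gt _ _

lemma mem_goodSet_consequence {s : ℝ} {n : ℕ} {ν : ProbabilityMeasure X}
    (hν : ν ∈ goodSet X s n) :
    ∃ r : ℝ, 0 < r ∧ r < min (((n : ℝ) + 1)⁻¹) (1/3) ∧ ∀ x : X,
      ENNReal.ofReal (r ^ (s + ((n : ℝ) + 1)⁻¹)) < (ν : Measure X) (ball x (3 * r)) := by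
  simp only [goodSet, mem_iUnion] at hν
  obtain ⟨r, hr, F, hF, hmem⟩ := hν
  refine ⟨r, hr.1, hr.2, fun x => ?_⟩
  obtain ⟨p, hpF, hpx⟩ := hF x
  calc ENNReal.ofReal (r ^ (s + ((n : ℝ) + 1)⁻¹))
      < ∫⁻ y, (thickenedIndicator hr.1 (ball p r) y : ℝ≥0∞) ∂(ν : Measure X) := hmem p hpF
    _ ≤ (ν : Measure X) (ball p (2 * r)) := lint_thickenedIndicator_le _ hr.1
    _ ≤ (ν : Measure X) (ball x (3 * r)) := by
        apply measure_mono
        apply ball_subset_ball'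
        rw [dist_comm]
        linarith


lemma exists_approx [Nonempty X] (s : ℝ) (hs0 : 0 ≤ s)
    (HNET : ∀ η : ℝ, 0 < η → ∀ᶠ r in 𝓝[>] (0:ℝ), ∃ F : Finset X,
      (∀ x : X, ∃ p ∈ F, dist x p < r) ∧ ((F.card : ℝ) ≤ r ^ (-(s + η))))
    (μ : ProbabilityMeasure X) {δ : ℝ} (hδ0 : 0 < δ) (hδ1 : δ < 1) :
    ∃ ν : ProbabilityMeasure X, (∀ n : ℕ, ν ∈ goodSet X s n) ∧
      ∀ f : X →ᵇ ℝ≥0,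
        (∫⁻ x, f x ∂(ν : Measure X) ≤ ∫⁻ x, f x ∂(μ : Measure X) + ENNReal.ofReal δ * (nndist 0 f : ℝ≥0∞)) ∧
        (∫⁻ x, f x ∂(μ : Measure X) ≤ ∫⁻ x, f x ∂(ν : Measure X) + ENNReal.ofReal δ * (nndist 0 f : ℝ≥0∞)) := by
  classical
  -- choose scales and nets
  have hchoice : ∀ n : ℕ, ∃ r : ℝ, ∃ F : Finset X,
      (0 < r) ∧ (r < min (((n : ℝ) + 1)⁻¹) (1/3)) ∧ (∀ x : X, ∃ p ∈ F, dist x p < r) ∧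
      ((F.card : ℝ) ≤ r ^ (-(s + ((n : ℝ) + 1)⁻¹ / 2))) ∧
      (r ^ (((n : ℝ) + 1)⁻¹ / 2) < δ / 2 ^ (n + 1)) := by
    intro n
    set η : ℝ := ((n : ℝ) + 1)⁻¹ with hη
    have hηpos : 0 < η := by positivity
    set β : ℝ := δ / 2 ^ (n + 1) with hβ
    have hβpos : 0 < β := by positivity
    set τ : ℝ := β ^ (2 / η) with hτ
    have hτpos : 0 < τ := Real.rpow_pos_of_pos hβpos _
    have hmin : (0:ℝ) < min (min (((n : ℝ) + 1)⁻¹) (1/3)) τ := by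
      apply lt_min (lt_min (by positivity) (by norm_num)) hτpos
    have hev := (HNET (η / 2) (by positivity)).and
      (Ioo_mem_nhdsGT_of_mem (show (0:ℝ) ∈ Ico (0:ℝ) (min (min (((n : ℝ) + 1)⁻¹) (1/3)) τ)
        from ⟨le_refl _, hmin⟩))
    obtain ⟨r, ⟨F, hFnet, hFcard⟩, hr0, hrlt⟩ := hev.exists
    have hrmin : r < min (((n : ℝ) + 1)⁻¹) (1/3) := hrlt.trans_le (min_le_left _ _)
    have hrτ : r < τ := hrlt.trans_le (min_le_right _ _)
    refine ⟨r, F, hr0, hrmin, hFnet, hFcard, ?_⟩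
    have h1 : r ^ (η / 2) < τ ^ (η / 2) := Real.rpow_lt_rpow hr0.le hrτ (by positivity)
    have h2 : τ ^ (η / 2) = β := by
      rw [hτ, ← Real.rpow_mul hβpos.le]
      rw [show 2 / η * (η / 2) = 1 by field_simp]
      exact Real.rpow_one β
    rw [h2] at h1
    exact h1
  choose rr FF hr0 hrlt hnet hcard hsmall using hchoice
  have hFne : ∀ n, (FF n).Nonempty := by
    intro n
    obtain ⟨x⟩ := (inferInstance : Nonempty X)
    obtain ⟨p, hp, _⟩ := hnet n x
    exact ⟨p, hp⟩
  -- the uniform measures on the nets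
  set unif : ℕ → Measure X := fun n =>
    (((FF n).card : ℝ≥0∞))⁻¹ • ∑ p ∈ FF n, Measure.dirac (p : X) with hunif
  have hcard_ne : ∀ n, ((FF n).card : ℝ≥0∞) ≠ 0 := by
    intro n
    simp [Finset.card_ne_zero_of_mem (hFne n).choose_spec]
  have hcard_ne_top : ∀ n, ((FF n).card : ℝ≥0∞) ≠ ∞ := fun n => ENNReal.natCast_ne_top _
  have hunif_univ : ∀ n, unif n univ = 1 := by
    intro n
    rw [hunif]
    simp only [Measure.smul_apply, smul_eq_mul]
    rw [Measure.finset_sum_apply]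
    simp only [Measure.dirac_apply_of_mem (mem_univ _)]
    rw [Finset.sum_const, nsmul_eq_mul, mul_one]
    exact ENNReal.inv_mul_cancel (hcard_ne n) (hcard_ne_top n)
  have hunif_ball : ∀ n, ∀ p ∈ FF n, (((FF n).card : ℝ≥0∞))⁻¹ ≤ unif n (ball p (rr n)) := by
    intro n p hp
    rw [hunif]
    simp only [Measure.smul_apply, smul_eq_mul]
    rw [Measure.finset_sum_apply]
    have h1 : (1 : ℝ≥0∞) ≤ ∑ q ∈ FF n, Measure.dirac (q : X) (ball p (rr n)) := by
      have h2 : Measure.dirac (p : X) (ball p (rr n)) = 1 :=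
        Measure.dirac_apply_of_mem (mem_ball_self (hr0 n))
      calc (1:ℝ≥0∞) = Measure.dirac (p : X) (ball p (rr n)) := h2.symm
        _ ≤ ∑ q ∈ FF n, Measure.dirac (q : X) (ball p (rr n)) :=
            Finset.single_le_sum (f := fun q : X => Measure.dirac q (ball p (rr n)))
              (fun q _ => zero_le) hp
    calc (((FF n).card : ℝ≥0∞))⁻¹ = (((FF n).card : ℝ≥0∞))⁻¹ * 1 := (mul_one _).symm
      _ ≤ _ := mul_le_mul_right h1 _
  -- the perturbation measure
  set σ : Measure X := Measure.sum (fun n => (ENNReal.ofReal (δ / 2 ^ (n + 1))) • unif n) with hσ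
  have hσ_univ : σ univ = ENNReal.ofReal δ := by
    rw [hσ, Measure.sum_apply _ MeasurableSet.univ]
    simp only [Measure.smul_apply, smul_eq_mul]
    have : ∀ n : ℕ, ENNReal.ofReal (δ / 2 ^ (n + 1)) * unif n univ
        = ENNReal.ofReal (δ / 2 ^ (n + 1)) := by
      intro n; rw [hunif_univ n, mul_one]
    rw [tsum_congr this]
    have heq : (fun n : ℕ => ENNReal.ofReal (δ / 2 ^ (n + 1)))
        = fun n : ℕ => ENNReal.ofReal (δ / 2 / 2 ^ n) := by
      funext n
      rw [pow_succ', div_div]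
    have hsummable : Summable fun n : ℕ => δ / 2 / 2 ^ n := by
      have := (summable_geometric_two : Summable fun n : ℕ => (1 / 2 : ℝ) ^ n).mul_left (δ / 2)
      refine this.congr fun n => ?_
      rw [div_pow, one_pow, mul_one_div, div_div]
    rw [heq, ← ENNReal.ofReal_tsum_of_nonneg (fun n => by positivity) hsummable,
      tsum_geometric_two' δ]
  set νm : Measure X := (1 - ENNReal.ofReal δ) • (μ : Measure X) + σ with hνm
  have hδle1 : ENNReal.ofReal δ ≤ 1 := ENNReal.ofReal_le_one.2 hδ1.le
  have hν_univ : νm univ = 1 := by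
    rw [hνm]
    simp only [Measure.add_apply, Measure.smul_apply, smul_eq_mul]
    rw [measure_univ, mul_one, hσ_univ]
    exact tsub_add_cancel_of_le hδle1
  have hνprob : IsProbabilityMeasure νm := ⟨hν_univ⟩
  refine ⟨⟨νm, hνprob⟩, ?_, ?_⟩
  · -- membership in every goodSet
    intro n
    rw [goodSet]
    refine mem_iUnion.2 ⟨rr n, mem_iUnion.2 ⟨⟨hr0 n, hrlt n⟩, mem_iUnion.2 ⟨FF n, mem_iUnion.2 ⟨hnet n, ?_⟩⟩⟩⟩
    intro p hp
    have hlow : ENNReal.ofReal (rr n ^ (s + ((n:ℝ)+1)⁻¹))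
        < νm (ball p (rr n)) := by
      have hb1 : ENNReal.ofReal (δ / 2 ^ (n + 1)) * (((FF n).card : ℝ≥0∞))⁻¹
          ≤ νm (ball p (rr n)) := by
        calc ENNReal.ofReal (δ / 2 ^ (n + 1)) * (((FF n).card : ℝ≥0∞))⁻¹
            ≤ ENNReal.ofReal (δ / 2 ^ (n + 1)) * unif n (ball p (rr n)) :=
              mul_le_mul_right (hunif_ball n p hp) _
          _ = ((ENNReal.ofReal (δ / 2 ^ (n + 1))) • unif n) (ball p (rr n)) := by
              simp [Measure.smul_apply]
          _ ≤ σ (ball p (rr n)) := by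
              rw [hσ, Measure.sum_apply _ measurableSet_ball]
              exact ENNReal.le_tsum n
          _ ≤ νm (ball p (rr n)) := by
              rw [hνm]
              simp only [Measure.add_apply]
              exact le_add_self
      refine lt_of_lt_of_le ?_ hb1
      -- strict inequality of the constants
      have hsplit : rr n ^ (s + ((n:ℝ)+1)⁻¹)
          = rr n ^ (((n:ℝ)+1)⁻¹ / 2) * rr n ^ (s + ((n:ℝ)+1)⁻¹ / 2) := by
        rw [← Real.rpow_add (hr0 n)]
        ring_nf
      have hofReal : ENNReal.ofReal (rr n ^ (s + ((n:ℝ)+1)⁻¹))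
          = ENNReal.ofReal (rr n ^ (((n:ℝ)+1)⁻¹ / 2)) *
            ENNReal.ofReal (rr n ^ (s + ((n:ℝ)+1)⁻¹ / 2)) := by
        rw [hsplit, ENNReal.ofReal_mul (Real.rpow_nonneg (hr0 n).le _)]
      rw [hofReal]
      have hc1 : ENNReal.ofReal (rr n ^ (s + ((n:ℝ)+1)⁻¹ / 2)) ≤ (((FF n).card : ℝ≥0∞))⁻¹ := by
        have h1 : ((FF n).card : ℝ≥0∞) ≤ ENNReal.ofReal (rr n ^ (-(s + ((n:ℝ)+1)⁻¹ / 2))) := by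
          rw [show (((FF n).card : ℝ≥0∞)) = ENNReal.ofReal ((FF n).card : ℝ) by
            rw [ENNReal.ofReal_natCast]]
          exact ENNReal.ofReal_le_ofReal (hcard n)
        rw [Real.rpow_neg (hr0 n).le,
          ENNReal.ofReal_inv_of_pos (Real.rpow_pos_of_pos (hr0 n) _)] at h1
        calc ENNReal.ofReal (rr n ^ (s + ((n:ℝ)+1)⁻¹ / 2))
            = ((ENNReal.ofReal (rr n ^ (s + ((n:ℝ)+1)⁻¹ / 2)))⁻¹)⁻¹ := (inv_inv _).symm
          _ ≤ (((FF n).card : ℝ≥0∞))⁻¹ := ENNReal.inv_le_inv.2 h1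
      have hc2 : ENNReal.ofReal (rr n ^ (((n:ℝ)+1)⁻¹ / 2))
          < ENNReal.ofReal (δ / 2 ^ (n + 1)) :=
        (ENNReal.ofReal_lt_ofReal_iff (div_pos hδ0 (by positivity))).2 (hsmall n)
      have hb0 : ENNReal.ofReal (rr n ^ (s + ((n:ℝ)+1)⁻¹ / 2)) ≠ 0 := by
        simp only [ne_eq, ENNReal.ofReal_eq_zero, not_le]
        exact Real.rpow_pos_of_pos (hr0 n) _
      calc ENNReal.ofReal (rr n ^ (((n:ℝ)+1)⁻¹ / 2)) *
            ENNReal.ofReal (rr n ^ (s + ((n:ℝ)+1)⁻¹ / 2))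
          < ENNReal.ofReal (δ / 2 ^ (n + 1)) *
            ENNReal.ofReal (rr n ^ (s + ((n:ℝ)+1)⁻¹ / 2)) := by
            exact (ENNReal.mul_lt_mul_iff_left hb0 ENNReal.ofReal_ne_top).2 hc2
        _ ≤ ENNReal.ofReal (δ / 2 ^ (n + 1)) * (((FF n).card : ℝ≥0∞))⁻¹ :=
            mul_le_mul_right hc1 _
    calc ENNReal.ofReal (rr n ^ (s + ((n:ℝ)+1)⁻¹)) < νm (ball p (rr n)) := hlow
      _ ≤ ∫⁻ x, (thickenedIndicator (hr0 n) (ball p (rr n)) x : ℝ≥0∞) ∂νm :=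
          measure_le_lintegral_thickenedIndicator νm measurableSet_ball (hr0 n)
  · -- integral bounds
    intro f
    have hfb : ∀ x, (f x : ℝ≥0∞) ≤ (nndist 0 f : ℝ≥0∞) := by
      intro x
      exact_mod_cast ENNReal.coe_le_coe.2 (f.apply_le_nndist_zero x)
    have hAle : ∫⁻ x, f x ∂(μ : Measure X) ≤ (nndist 0 f : ℝ≥0∞) := by
      calc ∫⁻ x, f x ∂(μ : Measure X) ≤ ∫⁻ _, (nndist 0 f : ℝ≥0∞) ∂(μ : Measure X) :=
            lintegral_mono hfb
        _ = (nndist 0 f : ℝ≥0∞) := by rw [lintegral_const, measure_univ, mul_one]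
    have hσle : ∫⁻ x, f x ∂σ ≤ ENNReal.ofReal δ * (nndist 0 f : ℝ≥0∞) := by
      calc ∫⁻ x, f x ∂σ ≤ ∫⁻ _, (nndist 0 f : ℝ≥0∞) ∂σ := lintegral_mono hfb
        _ = (nndist 0 f : ℝ≥0∞) * σ univ := by rw [lintegral_const]
        _ = ENNReal.ofReal δ * (nndist 0 f : ℝ≥0∞) := by rw [hσ_univ, mul_comm]
    have hsum : ∫⁻ x, f x ∂νm
        = (1 - ENNReal.ofReal δ) * ∫⁻ x, f x ∂(μ : Measure X) + ∫⁻ x, f x ∂σ := by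
      rw [hνm, lintegral_add_measure, lintegral_smul_measure, smul_eq_mul]
    constructor
    · show ∫⁻ x, (f x : ℝ≥0∞) ∂νm ≤ _
      rw [hsum]
      calc (1 - ENNReal.ofReal δ) * ∫⁻ x, f x ∂(μ : Measure X) + ∫⁻ x, f x ∂σ
          ≤ 1 * ∫⁻ x, f x ∂(μ : Measure X) + ENNReal.ofReal δ * (nndist 0 f : ℝ≥0∞) :=
            add_le_add (mul_le_mul_left tsub_le_self _) hσle
        _ = ∫⁻ x, f x ∂(μ : Measure X) + ENNReal.ofReal δ * (nndist 0 f : ℝ≥0∞) := by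
            rw [one_mul]
    · show _ ≤ ∫⁻ x, (f x : ℝ≥0∞) ∂νm + _
      rw [hsum]
      have h1 : (1 - ENNReal.ofReal δ) + ENNReal.ofReal δ = 1 := tsub_add_cancel_of_le hδle1
      calc ∫⁻ x, f x ∂(μ : Measure X)
          = ((1 - ENNReal.ofReal δ) + ENNReal.ofReal δ) * ∫⁻ x, f x ∂(μ : Measure X) := by
            rw [h1, one_mul]
        _ = (1 - ENNReal.ofReal δ) * ∫⁻ x, f x ∂(μ : Measure X)
            + ENNReal.ofReal δ * ∫⁻ x, f x ∂(μ : Measure X) := add_mul _ _ _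
        _ ≤ ((1 - ENNReal.ofReal δ) * ∫⁻ x, f x ∂(μ : Measure X) + ∫⁻ x, f x ∂σ)
            + ENNReal.ofReal δ * (nndist 0 f : ℝ≥0∞) :=
            add_le_add (le_add_right (le_refl _)) (mul_le_mul_right hAle _)


lemma dense_iInter_goodSet [Nonempty X] (s : ℝ) (hs0 : 0 ≤ s)
    (HNET : ∀ η : ℝ, 0 < η → ∀ᶠ r in 𝓝[>] (0:ℝ), ∃ F : Finset X,
      (∀ x : X, ∃ p ∈ F, dist x p < r) ∧ ((F.card : ℝ) ≤ r ^ (-(s + η)))) :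
    Dense (⋂ n : ℕ, goodSet X s n) := by
  intro μ
  have hδ0 : ∀ k : ℕ, (0:ℝ) < ((k:ℝ)+2)⁻¹ := fun k => by positivity
  have hδ1 : ∀ k : ℕ, ((k:ℝ)+2)⁻¹ < 1 := fun k => by
    rw [inv_lt_one_iff₀]
    right
    have : (0:ℝ) ≤ (k:ℝ) := Nat.cast_nonneg k
    linarith
  choose ν hν₁ hν₂ using fun k : ℕ => exists_approx s hs0 HNET μ (hδ0 k) (hδ1 k)
  have htt : Tendsto ν atTop (𝓝 μ) := by
    rw [ProbabilityMeasure.tendsto_iff_forall_lintegral_tendsto]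
    intro f
    set A := ∫⁻ x, (f x : ℝ≥0∞) ∂(μ : Measure X) with hA
    have hAne : A ≠ ∞ := lint_ne_top μ f
    set c : ℕ → ℝ≥0∞ := fun k => ENNReal.ofReal (((k:ℝ)+2)⁻¹) * (nndist 0 f : ℝ≥0∞) with hc
    have hctend : Tendsto c atTop (𝓝 0) := by
      have h1 : Tendsto (fun k : ℕ => ((k:ℝ)+2)⁻¹) atTop (𝓝 0) :=
        tendsto_inv_atTop_zero.comp
          (tendsto_atTop_add_const_right atTop 2 tendsto_natCast_atTop_atTop)
      have h2 : Tendsto (fun k : ℕ => ENNReal.ofReal (((k:ℝ)+2)⁻¹)) atTop (𝓝 0) := by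
        have := (ENNReal.continuous_ofReal.tendsto 0).comp h1
        simpa [Function.comp_def] using this
      have h3 := ENNReal.Tendsto.mul_const h2 (Or.inr (ENNReal.coe_ne_top (r := nndist 0 f)))
      simpa [hc] using h3
    apply tendsto_of_tendsto_of_tendsto_of_le_of_le
      (g := fun k => A - c k) (h := fun k => A + c k)
    · have := ENNReal.Tendsto.sub (tendsto_const_nhds (x := A)) hctend (Or.inl hAne)
      simpa using this
    · have := (tendsto_const_nhds (x := A)).add hctend
      simpa using this
    · intro k
      exact tsub_le_iff_right.2 ((hν₂ k f).2)
    · intro k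
      exact (hν₂ k f).1
  exact mem_closure_of_tendsto htt (Eventually.of_forall fun k => mem_iInter.2 (hν₁ k))

lemma liminf_le_of_mem_iInter_goodSet (s : ℝ) (hs0 : 0 ≤ s) {μ : ProbabilityMeasure X}
    (hμ : ∀ n : ℕ, μ ∈ goodSet X s n) (x : X) :
    Filter.liminf
      (fun r : ℝ => Real.log (((μ : Measure X) (ball x r)).toReal) / Real.log r)
      (𝓝[>] 0) ≤ s := by
  choose rr hr0 hrlt hrball using fun n : ℕ => mem_goodSet_consequence (hμ n)
  set q : ℝ → ℝ :=
    fun r => Real.log (((μ : Measure X) (ball x r)).toReal) / Real.log r with hq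
  have hbdd : IsBoundedUnder (· ≥ ·) (𝓝[>] (0:ℝ)) q := by
    refine ⟨0, ?_⟩
    rw [eventually_map]
    filter_upwards [Ioo_mem_nhdsGT_of_mem (show (0:ℝ) ∈ Ico (0:ℝ) 1 by norm_num)] with r hr
    have h1 : ((μ : Measure X) (ball x r)).toReal ≤ 1 := by
      have := prob_le_one (μ := (μ : Measure X)) (s := ball x r)
      calc ((μ : Measure X) (ball x r)).toReal ≤ (1 : ℝ≥0∞).toReal :=
            ENNReal.toReal_mono ENNReal.one_ne_top this
        _ = 1 := by simp
    have h2 : Real.log (((μ : Measure X) (ball x r)).toReal) ≤ 0 :=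
      Real.log_nonpos ENNReal.toReal_nonneg h1
    have h3 : Real.log r < 0 := Real.log_neg hr.1 hr.2
    exact div_nonneg_of_nonpos h2 h3.le
  suffices H : ∀ c : ℝ, s < c → liminf q (𝓝[>] (0:ℝ)) ≤ c by
    by_contra hcon
    push_neg at hcon
    obtain ⟨c, hc1, hc2⟩ := exists_between hcon
    exact absurd (H c hc1) (not_le.2 hc2)
  intro c hc
  apply liminf_le_of_frequently_le _ hbdd
  rw [frequently_iff]
  intro U hU
  rw [mem_nhdsGT_iff_exists_Ioo_subset] at hU
  obtain ⟨u, hu, hsub⟩ := hU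
  rw [mem_Ioi] at hu
  -- the auxiliary sequence
  set a : ℕ → ℝ := fun n =>
    (s + ((n:ℝ)+1)⁻¹) * (1 + Real.log 3 / Real.log (((n:ℝ)+1)/3)) with ha_def
  have h1 : Tendsto (fun n : ℕ => ((n:ℝ)+1)⁻¹) atTop (𝓝 0) :=
    tendsto_inv_atTop_zero.comp
      (tendsto_atTop_add_const_right atTop 1 tendsto_natCast_atTop_atTop)
  have h2 : Tendsto (fun n : ℕ => Real.log (((n:ℝ)+1)/3)) atTop atTop :=
    Real.tendsto_log_atTop.comp
      ((tendsto_atTop_add_const_right atTop 1 tendsto_natCast_atTop_atTop).atTop_div_const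
        (by norm_num))
  have h3 : Tendsto (fun n : ℕ => Real.log 3 / Real.log (((n:ℝ)+1)/3)) atTop (𝓝 0) :=
    Tendsto.div_atTop tendsto_const_nhds h2
  have ha : Tendsto a atTop (𝓝 s) := by
    have := ((tendsto_const_nhds (x := s)).add h1).mul ((tendsto_const_nhds (x := (1:ℝ))).add h3)
    simpa using this
  have hevent1 : ∀ᶠ n : ℕ in atTop, a n < c := ha.eventually_lt_const hc
  have hevent2 : ∀ᶠ n : ℕ in atTop, 3*((n:ℝ)+1)⁻¹ < u := by
    have := h1.const_mul (3:ℝ)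
    rw [mul_zero] at this
    exact this.eventually_lt_const hu
  have hevent3 : ∀ᶠ n : ℕ in atTop, 1 ≤ Real.log (((n:ℝ)+1)/3) := h2.eventually_ge_atTop 1
  obtain ⟨N, haN, h3u, hlogN⟩ := (hevent1.and (hevent2.and hevent3)).exists
  obtain ⟨h3u, hlogN⟩ := (⟨h3u, hlogN⟩ : _ ∧ _)
  set r := rr N with hrdef
  set t := 3 * r with htdef
  set ηn : ℝ := ((N:ℝ)+1)⁻¹ with hηn
  have hr0' : 0 < r := hr0 N
  have hrlt1 : r < ηn := (hrlt N).trans_le (min_le_left _ _)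
  have hrlt3 : r < 1/3 := (hrlt N).trans_le (min_le_right _ _)
  have ht0 : 0 < t := by positivity
  have ht1 : t < 1 := by rw [htdef]; linarith
  have htu : t < u := by
    rw [htdef]
    calc 3 * r < 3 * ηn := by linarith
      _ < u := h3u
  refine ⟨t, hsub ⟨ht0, htu⟩, ?_⟩
  -- now the estimate q t ≤ c
  set μB : ℝ≥0∞ := (μ : Measure X) (ball x t) with hμB
  have hμBlt : ENNReal.ofReal (r ^ (s + ηn)) < μB := hrball N x
  have hμBne : μB ≠ ∞ := measure_ne_top _ _
  have htoReal : r ^ (s + ηn) < μB.toReal := by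
    rw [← ENNReal.ofReal_lt_iff_lt_toReal (Real.rpow_nonneg hr0'.le _) hμBne]
    exact hμBlt
  have hBpos : 0 < μB.toReal := lt_trans (Real.rpow_pos_of_pos hr0' _) htoReal
  have hlogB : (s + ηn) * Real.log r ≤ Real.log μB.toReal := by
    rw [← Real.log_rpow hr0']
    exact Real.log_le_log (Real.rpow_pos_of_pos hr0' _) htoReal.le
  have hlogt_neg : Real.log t < 0 := Real.log_neg ht0 ht1
  show q t ≤ c
  rw [hq]
  simp only
  rw [div_le_iff_of_neg hlogt_neg]
  -- goal : c * log t ≤ log μB.toReal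
  set L : ℝ := Real.log (((N:ℝ)+1)/3) with hL
  have hLpos : 0 < L := by linarith
  have hlog3 : (0:ℝ) ≤ Real.log 3 := Real.log_nonneg (by norm_num)
  have hlogt_eq : Real.log t = Real.log 3 + Real.log r := by
    rw [htdef, Real.log_mul (by norm_num) hr0'.ne']
  have hlt : Real.log t ≤ -L := by
    have h4 : t < 3 * ηn := by rw [htdef]; linarith
    have h5 : Real.log t ≤ Real.log (3 * ηn) :=
      (Real.log_lt_log ht0 h4).le
    have h6 : Real.log (3 * ηn) = Real.log 3 - Real.log ((N:ℝ)+1) := by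
      rw [Real.log_mul (by norm_num) (by positivity), hηn, Real.log_inv]
      ring
    have h7 : L = Real.log ((N:ℝ)+1) - Real.log 3 := by
      rw [hL, Real.log_div (by positivity) (by norm_num)]
    linarith
  have key : (1 + Real.log 3 / L) * Real.log t ≤ Real.log r := by
    have h8 : (Real.log 3 / L) * Real.log t ≤ (Real.log 3 / L) * (-L) :=
      mul_le_mul_of_nonneg_left hlt (div_nonneg hlog3 hLpos.le)
    have h9 : (Real.log 3 / L) * (-L) = -Real.log 3 := by
      field_simp
    nlinarith [h8, h9, hlogt_eq]
  have key2 : a N * Real.log t ≤ (s + ηn) * Real.log r := by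
    have : a N * Real.log t = (s + ηn) * ((1 + Real.log 3 / L) * Real.log t) := by
      rw [ha_def]
      ring
    rw [this]
    exact mul_le_mul_of_nonneg_left key (by positivity)
  have key3 : c * Real.log t ≤ a N * Real.log t :=
    mul_le_mul_of_nonpos_right haN.le hlogt_neg.le
  calc c * Real.log t ≤ a N * Real.log t := key3
    _ ≤ (s + ηn) * Real.log r := key2
    _ ≤ Real.log μB.toReal := hlogB

end AbstractLemmas

/-- If `K ⊂ ℝ^d` is compact with upper box dimension `s`, then for a typical
probability measure `μ` on `K`, every `x ∈ K` satisfies `h_μ(x) ≤ s`; in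
particular `E_μ(h) = ∅` for all `h > s`. -/
theorem typical_holder_exponent_le_upper_box_dim
    (d : ℕ) (K : Set (EuclideanSpace ℝ (Fin d))) (hK : IsCompact K)
    (s : ℝ) (hs : upperBoxDim K = s) :
    ∃ Ω : Set (ProbabilityMeasure K), Dense Ω ∧ IsGδ Ω ∧
      ∀ μ ∈ Ω, (∀ x : K, holderExp (μ : Measure K) x ≤ s) ∧
        ∀ h > s, {x : K | holderExp (μ : Measure K) x = h} = ∅ := by
  classical
  subst hs
  by_cases hne : K.Nonempty
  · -- the main case : K nonempty
    haveI : Nonempty ↥K := hne.to_subtype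
    have hKb : Bornology.IsBounded K := hK.isBounded
    have hs0 : 0 ≤ upperBoxDim K := upperBoxDim_nonneg hKb hne
    -- translate the net existence to the subtype
    have HNET : ∀ η : ℝ, 0 < η → ∀ᶠ r in 𝓝[>] (0:ℝ), ∃ F : Finset ↥K,
        (∀ x : ↥K, ∃ p ∈ F, dist x p < r) ∧
        ((F.card : ℝ) ≤ r ^ (-(upperBoxDim K + η))) := by
      intro η hη
      filter_upwards [eventually_net hKb hne hη] with r hr
      obtain ⟨F, hFK, hFnet, hFcard⟩ := hr
      refine ⟨F.subtype (· ∈ K), ?_, ?_⟩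
      · intro x
        obtain ⟨p, hpF, hpd⟩ := hFnet x.1 x.2
        have hpK : p ∈ K := hFK hpF
        refine ⟨⟨p, hpK⟩, ?_, ?_⟩
        · simp only [Finset.mem_subtype]
          exact hpF
        · rwa [Subtype.dist_eq]
      · calc ((F.subtype (· ∈ K)).card : ℝ) ≤ (F.card : ℝ) := by
              have h1 : (F.subtype (· ∈ K)).card ≤ F.card := by
                rw [Finset.card_subtype]
                exact Finset.card_filter_le _ _
              exact_mod_cast h1
          _ ≤ r ^ (-(upperBoxDim K + η)) := hFcard
    refine ⟨⋂ n : ℕ, goodSet ↥K (upperBoxDim K) n,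
      dense_iInter_goodSet _ hs0 HNET,
      IsGδ.iInter fun n => (isOpen_goodSet _ _).isGδ, ?_⟩
    intro μ hμ
    have hmem : ∀ n : ℕ, μ ∈ goodSet ↥K (upperBoxDim K) n := fun n => mem_iInter.1 hμ n
    have hhold : ∀ x : ↥K, holderExp (μ : Measure ↥K) x ≤ upperBoxDim K := by
      intro x
      exact liminf_le_of_mem_iInter_goodSet _ hs0 hmem x
    refine ⟨hhold, ?_⟩
    intro h hh
    rw [Set.eq_empty_iff_forall_notMem]
    intro x hx
    rw [Set.mem_setOf_eq] at hx
    have := hhold x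
    rw [hx] at this
    exact absurd this (not_le.2 hh)
  · -- K is empty
    have hKempty : K = ∅ := Set.not_nonempty_iff_eq_empty.1 hne
    haveI hXempty : IsEmpty ↥K := Set.isEmpty_coe_sort.mpr hKempty
    haveI hPempty : IsEmpty (ProbabilityMeasure ↥K) := by
      constructor
      intro μ
      have h1 : (μ : Measure ↥K) univ = 1 := measure_univ
      rw [Set.univ_eq_empty_iff.2 hXempty, measure_empty] at h1
      exact zero_ne_one h1
    refine ⟨∅, ?_, isOpen_empty.isGδ, by simp⟩
    rw [dense_iff_closure_eq, closure_empty]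
    exact (Set.univ_eq_empty_iff.2 hPempty).symm
end

section
/- Let (Δ_k)_{k≥1} be positive integers and (J_k) a sequence with J_k > e^{J_{k−1}} for all k, and suppose there are constants c₁, c₂ > 0 with c₁ 2^{s J_k (1 − 1/k)} ≤ Δ_k ≤ c₂ 2^{s J_k} for all k, where s > 0. Then for all sufficiently large p, 2^{−s J_p (1 + 1/p)} ≤ (Π_{k=1}^p Δ_k)^{−1} ≤ 2^{−s J_p (1 − 2/p)}. -/
open Filter

set_option maxHeartbeats 1000000 in
/-- Key counting estimate: if `Δ_k` are positive integers with
`c₁ 2^{sJ_k(1−1/k)} ≤ Δ_k ≤ c₂ 2^{sJ_k}` and `J_k > e^{J_{k−1}}`, then for large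
`p`, `2^{−sJ_p(1+1/p)} ≤ (Π_{k=1}^p Δ_k)^{−1} ≤ 2^{−sJ_p(1−2/p)}`. -/
theorem cantor_measure_mass_estimate
    (s : ℝ) (hs : 0 < s) (Δ : ℕ → ℕ) (hΔ : ∀ k, 0 < Δ k) (J : ℕ → ℝ)
    (hJ : ∀ k ≥ 1, Real.exp (J (k - 1)) < J k)
    (c₁ c₂ : ℝ) (hc₁ : 0 < c₁) (hc₂ : 0 < c₂)
    (hlow : ∀ k ≥ 1, c₁ * 2 ^ (s * J k * (1 - 1 / (k : ℝ))) ≤ (Δ k : ℝ))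
    (hhigh : ∀ k ≥ 1, (Δ k : ℝ) ≤ c₂ * 2 ^ (s * J k)) :
    ∀ᶠ p in atTop,
      (2 : ℝ) ^ (-(s * J p * (1 + 1 / (p : ℝ)))) ≤ (∏ k ∈ Finset.Icc 1 p, (Δ k : ℝ))⁻¹ ∧
      (∏ k ∈ Finset.Icc 1 p, (Δ k : ℝ))⁻¹ ≤ (2 : ℝ) ^ (-(s * J p * (1 - 2 / (p : ℝ)))) := by
  have h2 : (1:ℝ) < 2 := one_lt_two
  have hJpos : ∀ k, 1 ≤ k → 0 < J k := fun k hk => (Real.exp_pos _).trans (hJ k hk)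
  have hstep : ∀ k, 1 ≤ k → J k + 1 ≤ J (k + 1) := by
    intro k hk
    have h := hJ (k + 1) (by omega)
    have hk1 : k + 1 - 1 = k := by omega
    rw [hk1] at h
    linarith [Real.add_one_le_exp (J k)]
  have hmono : ∀ j k, 1 ≤ j → j ≤ k → J j ≤ J k := by
    intro j k hj hjk
    induction k, hjk using Nat.le_induction with
    | base => exact le_rfl
    | succ n hn ih => have := hstep n (le_trans hj hn); linarith
  have hlin : ∀ p : ℕ, 2 ≤ p → (p : ℝ) - 1 ≤ J p := by
    intro p hp
    induction p, hp using Nat.le_induction with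
    | base =>
      have h1 := hJpos 1 le_rfl
      have h := hJ 2 (by norm_num)
      norm_num at h ⊢
      linarith [Real.add_one_le_exp (J 1)]
    | succ n hn ih =>
      have := hstep n (by omega)
      push_cast
      linarith
  -- constants
  set C₁ : ℝ := max (-Real.logb 2 c₁) 0 with hC₁def
  set C₂ : ℝ := max (Real.logb 2 c₂) 0 with hC₂def
  have hC₁ : 0 ≤ C₁ := le_max_right _ _
  have hC₂ : 0 ≤ C₂ := le_max_right _ _
  -- J (p-1) tends to infinity
  have htend : Tendsto (fun p : ℕ => J (p - 1)) atTop atTop := by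
    refine tendsto_atTop_mono' atTop ?_
      (tendsto_atTop_add_const_right atTop (-2) tendsto_natCast_atTop_atTop)
    · filter_upwards [eventually_ge_atTop 3] with p hp
      have h := hlin (p - 1) (by omega)
      have : ((p - 1 : ℕ) : ℝ) = (p : ℝ) - 1 := by
        have : 1 ≤ p := by omega
        push_cast [this]; ring
      rw [this] at h
      linarith
  -- master inequality
  have hM : ∀ᶠ p : ℕ in atTop,
      (C₁ + C₂) * (p : ℝ) ^ 2 + s * (p : ℝ) ^ 2 * J (p - 1) ≤ s * J p := by
    filter_upwards [htend.eventually_ge_atTop (max 4608 (4608 * (C₁ + C₂) / s + 1)),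
      eventually_ge_atTop 3] with p hY hp3
    set y := J (p - 1) with hydef
    have hy2 : (4608 : ℝ) ≤ y := le_trans (le_max_left _ _) hY
    have hy3 : 4608 * (C₁ + C₂) / s + 1 ≤ y := le_trans (le_max_right _ _) hY
    have hy1 : (1 : ℝ) ≤ y := by linarith
    have hyp : (p : ℝ) ≤ y + 2 := by
      have h := hlin (p - 1) (by omega)
      have hcast : ((p - 1 : ℕ) : ℝ) = (p : ℝ) - 1 := by
        have : 1 ≤ p := by omega
        push_cast [this]; ring
      rw [hcast] at h
      linarith
    have hJp : Real.exp y < J p := hJ p (by omega)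
    have hexp : y ^ 4 / 256 ≤ Real.exp y := by
      have h4 : y / 4 + 1 ≤ Real.exp (y / 4) := Real.add_one_le_exp _
      have hpow : (y / 4) ^ 4 ≤ Real.exp (y / 4) ^ 4 := by
        apply pow_le_pow_left₀ (by linarith) (by linarith)
      have hmul : Real.exp (y / 4) ^ 4 = Real.exp y := by
        rw [← Real.exp_nat_mul]
        congr 1
        push_cast
        ring
      calc y ^ 4 / 256 = (y / 4) ^ 4 := by ring
        _ ≤ Real.exp (y / 4) ^ 4 := hpow
        _ = Real.exp y := hmul
    have hp2 : (p : ℝ) ^ 2 ≤ 9 * y ^ 2 := by nlinarith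
    -- s * y ≥ 4608 * (C₁ + C₂) + s
    have hsy : 4608 * (C₁ + C₂) + s ≤ s * y := by
      have := mul_le_mul_of_nonneg_left hy3 hs.le
      have hs' : s ≠ 0 := ne_of_gt hs
      field_simp at this
      linarith
    have hA : 9 * s * y ≤ s * y ^ 2 / 512 := by nlinarith
    have hB : 9 * (C₁ + C₂) ≤ s * y ^ 2 / 512 := by nlinarith
    have hypos : 0 < y := by linarith
    have hkey : (C₁ + C₂) * (9 * y ^ 2) + s * (9 * y ^ 2) * y ≤ s * y ^ 4 / 256 := by
      have h := mul_le_mul_of_nonneg_right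
        (by linarith : 9 * (C₁ + C₂) + 9 * s * y ≤ s * y ^ 2 / 256) (sq_nonneg y)
      calc (C₁ + C₂) * (9 * y ^ 2) + s * (9 * y ^ 2) * y
          = (9 * (C₁ + C₂) + 9 * s * y) * y ^ 2 := by ring
        _ ≤ s * y ^ 2 / 256 * y ^ 2 := h
        _ = s * y ^ 4 / 256 := by ring
    calc (C₁ + C₂) * (p : ℝ) ^ 2 + s * (p : ℝ) ^ 2 * y
        ≤ (C₁ + C₂) * (9 * y ^ 2) + s * (9 * y ^ 2) * y := by
          have h1 := mul_le_mul_of_nonneg_left hp2 (by linarith : (0:ℝ) ≤ C₁ + C₂)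
          have h2 := mul_le_mul_of_nonneg_right
            (mul_le_mul_of_nonneg_left hp2 hs.le) hypos.le
          linarith
      _ ≤ s * y ^ 4 / 256 := hkey
      _ = s * (y ^ 4 / 256) := by ring
      _ ≤ s * Real.exp y := mul_le_mul_of_nonneg_left hexp hs.le
      _ ≤ s * J p := mul_le_mul_of_nonneg_left hJp.le hs.le
  -- main conclusion
  filter_upwards [hM, eventually_ge_atTop 3] with p hMp hp3
  have hppos : (0 : ℝ) < p := by positivity
  have hp1 : (1 : ℝ) ≤ p := by exact_mod_cast Nat.one_le_iff_ne_zero.mpr (by omega)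
  have hJppos : 0 < J p := hJpos p (by omega)
  have hJpm : 0 < J (p - 1) := hJpos (p - 1) (by omega)
  have hPpos : 0 < ∏ k ∈ Finset.Icc 1 p, (Δ k : ℝ) :=
    Finset.prod_pos fun k _ => by exact_mod_cast hΔ k
  set P := ∏ k ∈ Finset.Icc 1 p, (Δ k : ℝ) with hPdef
  -- logb of P equals sum of logb
  have hlogP : Real.logb 2 P = ∑ k ∈ Finset.Icc 1 p, Real.logb 2 (Δ k) := by
    rw [hPdef, Real.logb_prod]
    intro k _
    exact_mod_cast (hΔ k).ne'
  have hterm_hi : ∀ k ∈ Finset.Icc 1 p, Real.logb 2 ((Δ k : ℝ)) ≤ Real.logb 2 c₂ + s * J k := by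
    intro k hk
    have hk1 : 1 ≤ k := (Finset.mem_Icc.mp hk).1
    have hΔk : (0:ℝ) < (Δ k : ℝ) := by exact_mod_cast hΔ k
    have h := hhigh k hk1
    have hrpos : (0:ℝ) < 2 ^ (s * J k) := Real.rpow_pos_of_pos two_pos _
    calc Real.logb 2 ((Δ k : ℝ)) ≤ Real.logb 2 (c₂ * 2 ^ (s * J k)) :=
          Real.logb_le_logb_of_le h2 hΔk h
      _ = Real.logb 2 c₂ + s * J k := by
          rw [Real.logb_mul (ne_of_gt hc₂) (ne_of_gt hrpos),
            Real.logb_rpow (by norm_num) (by norm_num)]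
  have hterm_nonneg : ∀ k ∈ Finset.Icc 1 p, 0 ≤ Real.logb 2 ((Δ k : ℝ)) := by
    intro k _
    exact Real.logb_nonneg h2 (by exact_mod_cast hΔ k)
  have hterm_lo : Real.logb 2 c₁ + s * J p * (1 - 1 / (p : ℝ)) ≤ Real.logb 2 ((Δ p : ℝ)) := by
    have h := hlow p (by omega)
    have hΔp : (0:ℝ) < (Δ p : ℝ) := by exact_mod_cast hΔ p
    have hrpos : (0:ℝ) < 2 ^ (s * J p * (1 - 1 / (p : ℝ))) := Real.rpow_pos_of_pos two_pos _
    calc Real.logb 2 c₁ + s * J p * (1 - 1 / (p : ℝ))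
        = Real.logb 2 (c₁ * 2 ^ (s * J p * (1 - 1 / (p : ℝ)))) := by
          rw [Real.logb_mul (ne_of_gt hc₁) (ne_of_gt hrpos),
            Real.logb_rpow (by norm_num) (by norm_num)]
      _ ≤ Real.logb 2 ((Δ p : ℝ)) := Real.logb_le_logb_of_le h2 (by positivity) h
  -- sum over Icc 1 p splits
  have hsplit : ∑ k ∈ Finset.Icc 1 p, J k
      = (∑ k ∈ Finset.Icc 1 (p - 1), J k) + J p := by
    have hpe : p = (p - 1) + 1 := by omega
    rw [hpe, Finset.sum_Icc_succ_top (by omega)]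
    simp
  have hsum_le : ∑ k ∈ Finset.Icc 1 (p - 1), J k ≤ ((p : ℝ) - 1) * J (p - 1) := by
    have hcard : (Finset.Icc 1 (p - 1)).card = p - 1 := by
      rw [Nat.card_Icc]; omega
    have h := Finset.sum_le_card_nsmul (Finset.Icc 1 (p - 1)) J (J (p - 1))
      (fun k hk => hmono k (p - 1) (Finset.mem_Icc.mp hk).1 (Finset.mem_Icc.mp hk).2)
    rw [hcard, nsmul_eq_mul] at h
    have hcast : ((p - 1 : ℕ) : ℝ) = (p : ℝ) - 1 := by
      have : 1 ≤ p := by omega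
      push_cast [this]; ring
    rw [hcast] at h
    exact h
  -- derived linear facts from master inequality
  have hC₁lb : -Real.logb 2 c₁ ≤ C₁ := le_max_left _ _
  have hC₂ub : Real.logb 2 c₂ ≤ C₂ := le_max_left _ _
  have hpp : (p : ℝ) ≤ (p : ℝ) ^ 2 := by nlinarith
  have hkey1 : -Real.logb 2 c₁ * (p : ℝ) ≤ s * J p := by
    have t1 := mul_le_mul_of_nonneg_right hC₁lb hppos.le
    have t2 := mul_le_mul_of_nonneg_left hpp hC₁
    have t3 := mul_nonneg hC₂ (sq_nonneg (p : ℝ))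
    have t4 := mul_nonneg (mul_nonneg hs.le (sq_nonneg (p : ℝ))) hJpm.le
    linarith
  have hkey2 : (p : ℝ) ^ 2 * Real.logb 2 c₂ + s * ((p : ℝ) * (((p:ℝ) - 1) * J (p - 1)))
      ≤ s * J p := by
    have u1 := mul_le_mul_of_nonneg_right hC₂ub (sq_nonneg (p : ℝ))
    have u2 : (p : ℝ) * ((p : ℝ) - 1) ≤ (p : ℝ) ^ 2 := by nlinarith
    have u3 := mul_le_mul_of_nonneg_right (mul_le_mul_of_nonneg_left u2 hs.le) hJpm.le
    have u4 := mul_nonneg hC₁ (sq_nonneg (p : ℝ))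
    linarith
  -- the two main bounds
  have hub : P ≤ (2:ℝ) ^ (s * J p * (1 + 1 / (p : ℝ))) := by
    rw [← Real.logb_le_iff_le_rpow h2 hPpos, hlogP]
    have hS : ∑ k ∈ Finset.Icc 1 p, Real.logb 2 ((Δ k : ℝ))
        ≤ ∑ k ∈ Finset.Icc 1 p, (Real.logb 2 c₂ + s * J k) :=
      Finset.sum_le_sum hterm_hi
    have hsum2 : ∑ k ∈ Finset.Icc 1 p, (Real.logb 2 c₂ + s * J k)
        = (p : ℝ) * Real.logb 2 c₂ + s * ∑ k ∈ Finset.Icc 1 p, J k := by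
      rw [Finset.sum_add_distrib, Finset.sum_const, Finset.mul_sum, Nat.card_Icc]
      simp [nsmul_eq_mul]
    have e3 : s * J p * (1 + 1 / (p : ℝ)) = s * J p + s * J p / (p : ℝ) := by
      field_simp
    have hd : (p : ℝ) * Real.logb 2 c₂ + s * (((p:ℝ) - 1) * J (p - 1)) ≤ s * J p / (p : ℝ) := by
      rw [le_div_iff₀ hppos]
      nlinarith [hkey2]
    calc ∑ k ∈ Finset.Icc 1 p, Real.logb 2 ((Δ k : ℝ))
        ≤ (p : ℝ) * Real.logb 2 c₂ + s * ∑ k ∈ Finset.Icc 1 p, J k := by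
          rw [← hsum2]; exact hS
      _ ≤ (p : ℝ) * Real.logb 2 c₂ + s * ((((p:ℝ) - 1) * J (p - 1)) + J p) := by
          rw [hsplit]
          have := mul_le_mul_of_nonneg_left (add_le_add_right hsum_le (J p)) hs.le
          linarith
      _ ≤ s * J p * (1 + 1 / (p : ℝ)) := by rw [e3]; linarith [hd]
  have hlb : (2:ℝ) ^ (s * J p * (1 - 2 / (p : ℝ))) ≤ P := by
    rw [← Real.le_logb_iff_rpow_le h2 hPpos, hlogP]
    have hmem : p ∈ Finset.Icc 1 p := Finset.mem_Icc.mpr ⟨by omega, le_rfl⟩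
    have hsingle : Real.logb 2 ((Δ p : ℝ)) ≤ ∑ k ∈ Finset.Icc 1 p, Real.logb 2 ((Δ k : ℝ)) :=
      Finset.single_le_sum hterm_nonneg hmem
    have hdiv : -Real.logb 2 c₁ ≤ s * J p / (p : ℝ) := by
      rw [le_div_iff₀ hppos]; linarith [hkey1]
    have e12 : s * J p * (1 - 1 / (p : ℝ)) - s * J p * (1 - 2 / (p : ℝ)) = s * J p / (p : ℝ) := by
      field_simp; ring
    linarith [hterm_lo]
  refine ⟨?_, ?_⟩
  · rw [Real.rpow_neg (by norm_num)]
    exact inv_anti₀ hPpos hub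
  · rw [Real.rpow_neg (by norm_num)]
    exact inv_anti₀ (Real.rpow_pos_of_pos two_pos _) hlb
end
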